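/- arXiv:1509.02478 — 5 statements merged into one kernel-verified Lean document; each statement's English description precedes it below -/
import Mathlib

section
/- For any finite tree with n edges, the (single-stepped) Green walk around the tree is a single closed walk of length 2n; that is, it traverses each side (half-edge) of each edge exactly once before returning to its start. -/
/-!
A ribbon graph is encoded as a combinatorial map on a finite set `H` of half-edges:
`sigma` is the fixed-point-free involution pairing the two half-edges of each edge,
and `rho` is the permutation whose cycles are the cyclic orderings of the half-edges
around each vertex.  Edges are the orbits of `sigma`, vertices the orbits of `rho`.
The Green walk step sends a half-edge `x` at a vertex `v` to the half-edge `y`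
whose opposite half-edge is the successor `rho x` of `x` at `v`, i.e. `y = sigma (rho x)`.
-/

structure RibbonGraph (H : Type) where
  sigma : Equiv.Perm H
  rho : Equiv.Perm H
  invol : ∀ x, sigma (sigma x) = x
  noFix : ∀ x, sigma x ≠ x
  conn : ∀ x y, Relation.EqvGen (fun a b => sigma a = b ∨ rho a = b) x y

/-- The orbit ("same cycle") setoid of a permutation. -/
def sameCycleSetoid {H : Type} (π : Equiv.Perm H) : Setoid H :=
  ⟨π.SameCycle, ⟨fun x => Equiv.Perm.SameCycle.refl π x, fun h => h.symm,
    fun h₁ h₂ => h₁.trans h₂⟩⟩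

namespace RibbonGraph

variable {H : Type}

/-- The step map of the (anticlockwise) Green walk: `x ↦ sigma (rho x)`. -/
def step (G : RibbonGraph H) : Equiv.Perm H := G.rho.trans G.sigma

/-- The step map of the clockwise Green walk: `x ↦ sigma (rho⁻¹ x)`. -/
def stepC (G : RibbonGraph H) : Equiv.Perm H := G.rho.symm.trans G.sigma

/-- The number of edges: the number of orbits of the involution `sigma`. -/
noncomputable def numEdges (G : RibbonGraph H) : ℕ := Nat.card (Quotient (sameCycleSetoid G.sigma))

/-- The number of vertices: the number of orbits of `rho`. -/
noncomputable def numVertices (G : RibbonGraph H) : ℕ := Nat.card (Quotient (sameCycleSetoid G.rho))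

/-- A (connected) ribbon graph is a tree when `#vertices = #edges + 1`. -/
def IsTree (G : RibbonGraph H) : Prop := G.numVertices = G.numEdges + 1

/-- A half-edge `x` spans a bridge if its edge `{x, sigma x}` disconnects the graph:
there is no walk from `x` to `sigma x` avoiding that edge. -/
def IsBridge (G : RibbonGraph H) (x₀ : H) : Prop :=
  ¬ Relation.ReflTransGen
      (fun a b => G.rho a = b ∨ G.rho b = a ∨ (G.sigma a = b ∧ a ≠ x₀ ∧ a ≠ G.sigma x₀))
      x₀ (G.sigma x₀)

end RibbonGraph

open Relation

namespace GW
variable {H : Type}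

/-- surjection with a collision: codomain is strictly smaller. -/
lemma card_succ_le_of_surj {A B : Type} [Finite A] (f : A → B) (hf : Function.Surjective f)
    {u v : A} (huv : u ≠ v) (hfe : f u = f v) : Nat.card B + 1 ≤ Nat.card A := by
  obtain ⟨g, hg⟩ := hf.hasRightInverse
  have : Finite B := Finite.of_surjective f hf
  obtain ⟨w, hw1, hw2⟩ : ∃ w, g (f u) ≠ w ∧ f w = f u := by
    by_cases h : g (f u) = u
    · exact ⟨v, by rw [h]; exact huv, hfe.symm⟩
    · exact ⟨u, h, rfl⟩
  have hginj : Function.Injective g := hg.injective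
  have key : Function.Injective (fun o : Option B => o.elim w g) := by
    intro o₁ o₂ h12
    match o₁, o₂ with
    | none, none => rfl
    | some b₁, some b₂ => simp only [Option.elim] at h12; exact congrArg _ (hginj h12)
    | none, some b => exfalso; simp only [Option.elim] at h12
                      have hb : f w = b := by rw [h12, hg b]
                      exact hw1 (by rw [h12, ← hb, hw2])
    | some b, none => exfalso; simp only [Option.elim] at h12
                      have hb : f w = b := by rw [← h12, hg b]
                      exact hw1 (by rw [← h12, ← hb, hw2])
  calc Nat.card B + 1 = Nat.card (Option B) := (Finite.card_option).symm
    _ ≤ Nat.card A := Nat.card_le_card_of_injective _ key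

/-- natural map between quotients of comparable setoids -/
def qmap (r t : Setoid H) (h : ∀ x y, r.r x y → t.r x y) : Quotient r → Quotient t :=
  Quotient.map' id (fun x y hxy => h x y hxy)

lemma qmap_mk (r t : Setoid H) (h : ∀ x y, r.r x y → t.r x y) (x : H) :
    qmap r t h (Quotient.mk r x) = Quotient.mk t x := rfl

lemma qmap_surj (r t : Setoid H) (h : ∀ x y, r.r x y → t.r x y) :
    Function.Surjective (qmap r t h) := by
  intro q; induction q using Quotient.ind with
  | _ x => exact ⟨Quotient.mk r x, rfl⟩

lemma K_le [Finite H] (r t : Setoid H) (h : ∀ x y, r.r x y → t.r x y) :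
    Nat.card (Quotient t) ≤ Nat.card (Quotient r) :=
  Nat.card_le_card_of_surjective _ (qmap_surj r t h)

lemma K_eq [Finite H] (r t : Setoid H) (h : ∀ x y, r.r x y → t.r x y)
    (h' : ∀ x y, t.r x y → r.r x y) :
    Nat.card (Quotient r) = Nat.card (Quotient t) :=
  le_antisymm (K_le t r h') (K_le r t h)

lemma K_strict [Finite H] (r t : Setoid H) (h : ∀ x y, r.r x y → t.r x y)
    {a b : H} (hab : t.r a b) (hnab : ¬ r.r a b) :
    Nat.card (Quotient t) + 1 ≤ Nat.card (Quotient r) := by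
  refine card_succ_le_of_surj (qmap r t h) (qmap_surj r t h)
    (u := Quotient.mk r a) (v := Quotient.mk r b) ?_ ?_
  · intro hq; exact hnab (Quotient.exact' hq)
  · rw [qmap_mk, qmap_mk]; exact Quotient.sound' hab

lemma K_plus [Finite H] (r t : Setoid H) (h : ∀ x y, r.r x y → t.r x y) (a b : H)
    (hT : ∀ x y, t.r x y →
      r.r x y ∨ (r.r x a ∧ r.r b y) ∨ (r.r x b ∧ r.r a y)) :
    Nat.card (Quotient r) ≤ Nat.card (Quotient t) + 1 := by
  classical
  have : Finite (Quotient t) := Quotient.finite _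
  have : Finite (Option (Quotient t)) := by
    haveI := Fintype.ofFinite (Quotient t); infer_instance
  have key : Function.Injective (fun u : Quotient r =>
      if u = Quotient.mk r a then (none : Option (Quotient t)) else some (qmap r t h u)) := by
    intro u v huv
    simp only [] at huv
    by_cases hu : u = Quotient.mk r a <;> by_cases hv : v = Quotient.mk r a
    · rw [hu, hv]
    · rw [if_pos hu, if_neg hv] at huv; exact absurd huv (by simp)
    · rw [if_neg hu, if_pos hv] at huv; exact absurd huv (by simp)
    · rw [if_neg hu, if_neg hv, Option.some_inj] at huv
      induction u using Quotient.ind with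
      | _ x =>
      induction v using Quotient.ind with
      | _ y =>
      have hxy : t.r x y := Quotient.exact' (by rw [qmap_mk, qmap_mk] at huv; exact huv)
      rcases hT x y hxy with h1 | ⟨h1, h2⟩ | ⟨h1, h2⟩
      · exact Quotient.sound' h1
      · exact absurd (Quotient.sound' h1) hu
      · exact absurd (Quotient.sound' (r.iseqv.symm h2)) hv
  calc Nat.card (Quotient r) ≤ Nat.card (Option (Quotient t)) :=
        Nat.card_le_card_of_injective _ key
    _ = Nat.card (Quotient t) + 1 := Finite.card_option


/-- the relation "same class, possibly after crossing the bridge a-b" -/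
def T (r : H → H → Prop) (a b : H) (x y : H) : Prop :=
  r x y ∨ (r x a ∧ r b y) ∨ (r x b ∧ r a y)

lemma T_equivalence {r : H → H → Prop} (hr : Equivalence r) (a b : H) :
    Equivalence (T r a b) := by
  constructor
  · intro x; exact Or.inl (hr.refl x)
  · rintro x y (h | ⟨h1, h2⟩ | ⟨h1, h2⟩)
    · exact Or.inl (hr.symm h)
    · exact Or.inr (Or.inr ⟨hr.symm h2, hr.symm h1⟩)
    · exact Or.inr (Or.inl ⟨hr.symm h2, hr.symm h1⟩)
  · rintro x y z (h | ⟨h1, h2⟩ | ⟨h1, h2⟩) (h' | ⟨h1', h2'⟩ | ⟨h1', h2'⟩)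
    · exact Or.inl (hr.trans h h')
    · exact Or.inr (Or.inl ⟨hr.trans h h1', h2'⟩)
    · exact Or.inr (Or.inr ⟨hr.trans h h1', h2'⟩)
    · exact Or.inr (Or.inl ⟨h1, hr.trans h2 h'⟩)
    · exact Or.inl (hr.trans h1 (hr.trans (hr.trans (hr.symm h1') (hr.symm h2)) h2'))
    · exact Or.inl (hr.trans h1 h2')
    · exact Or.inr (Or.inr ⟨h1, hr.trans h2 h'⟩)
    · exact Or.inl (hr.trans h1 h2')
    · exact Or.inr (Or.inr ⟨h1, h2'⟩)

lemma sameCycle_equivalence (π : Equiv.Perm H) : Equivalence π.SameCycle :=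
  ⟨Equiv.Perm.SameCycle.refl π, fun h => h.symm, fun h h' => h.trans h'⟩

lemma sameCycle_subset {g : Equiv.Perm H} {e : H → H → Prop} (he : Equivalence e)
    (hstep : ∀ x, e x (g x)) : ∀ x y, g.SameCycle x y → e x y := by
  have key : ∀ (k : ℤ) (x : H), e x ((g ^ k) x) := by
    intro k
    induction k using Int.induction_on with
    | zero => intro x; simpa using he.refl x
    | succ i ih =>
        intro x
        have h3 : (g ^ ((i : ℤ) + 1)) x = (g ^ (i : ℤ)) (g x) := by
          rw [zpow_add_one]
          simp [Equiv.Perm.mul_apply]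
        rw [h3]
        exact he.trans (hstep x) (ih (g x))
    | pred i ih =>
        intro x
        have h3 : (g ^ (-(i : ℤ))) x = g ((g ^ (-(i : ℤ) - 1)) x) := by
          have : (g : Equiv.Perm H) ^ (-(i : ℤ)) = g * g ^ (-(i : ℤ) - 1) := by
            rw [← zpow_one_add]; congr 1; ring
          rw [this]; rfl
        have h4 := hstep ((g ^ (-(i : ℤ) - 1)) x)
        rw [← h3] at h4
        exact he.trans (ih x) (he.symm h4)
  rintro x y ⟨k, hk⟩
  rw [← hk]; exact key k x

/-- core lemma: cycles of `swap a b * π` are contained in cycles of `π`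
joined along the bridge `a`-`b`. -/
lemma core [DecidableEq H] (π : Equiv.Perm H) (a b : H) :
    ∀ x y, (Equiv.swap a b * π).SameCycle x y → T π.SameCycle a b x y := by
  apply sameCycle_subset (T_equivalence (sameCycle_equivalence π) a b)
  intro x
  rcases eq_or_ne (π x) a with h | h
  · have : (Equiv.swap a b * π) x = b := by
      rw [Equiv.Perm.mul_apply, h, Equiv.swap_apply_left]
    rw [this]
    exact Or.inr (Or.inl ⟨⟨1, by simpa using h⟩, Equiv.Perm.SameCycle.refl π b⟩)
  · rcases eq_or_ne (π x) b with h' | h'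
    · have : (Equiv.swap a b * π) x = a := by
        rw [Equiv.Perm.mul_apply, h', Equiv.swap_apply_right]
      rw [this]
      exact Or.inr (Or.inr ⟨⟨1, by simpa using h'⟩, Equiv.Perm.SameCycle.refl π a⟩)
    · have : (Equiv.swap a b * π) x = π x := by
        rw [Equiv.Perm.mul_apply, Equiv.swap_apply_of_ne_of_ne h h']
      rw [this]
      exact Or.inl ⟨1, by simp⟩

/-- if `a` and `b` are in different cycles of `π`, then multiplying by
`swap a b` merges them: `b` and `a` become same-cycle. -/
lemma chase [Finite H] [DecidableEq H] (π : Equiv.Perm H) {a b : H}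
    (h : ¬ π.SameCycle a b) : (Equiv.swap a b * π).SameCycle b a := by
  haveI : Fintype H := Fintype.ofFinite H
  set g := Equiv.swap a b * π with hg
  have hQ : ∃ k, 0 < k ∧ (π ^ k) b = b := by
    refine ⟨orderOf π, ?_, by simp [pow_orderOf_eq_one]⟩
    exact orderOf_pos π
  obtain ⟨hkpos, hkfix⟩ := Nat.find_spec hQ
  have hne : ∀ i : ℕ, 0 < i → (π ^ i) b ≠ a := by
    intro i hi hia
    exact h (Equiv.Perm.SameCycle.symm ⟨(i : ℤ), by simpa using hia⟩)
  have claim : ∀ i, i < Nat.find hQ → (g ^ i) b = (π ^ i) b := by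
    intro i
    induction i with
    | zero => intro _; simp
    | succ i ih =>
        intro hik
        have hi' : i < Nat.find hQ := Nat.lt_of_succ_lt hik
        have hnb : (π ^ (i + 1)) b ≠ b := by
          intro hfix
          exact Nat.find_min hQ hik ⟨Nat.succ_pos i, hfix⟩
        have hna : (π ^ (i + 1)) b ≠ a := hne (i + 1) (Nat.succ_pos i)
        rw [pow_succ', Equiv.Perm.mul_apply, ih hi', hg, Equiv.Perm.mul_apply,
          ← Equiv.Perm.mul_apply π (π ^ i), ← pow_succ',
          Equiv.swap_apply_of_ne_of_ne hna hnb]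
  have hk' : Nat.find hQ = (Nat.find hQ - 1) + 1 := (Nat.succ_pred_eq_of_pos hkpos).symm
  have hlt : Nat.find hQ - 1 < Nat.find hQ := Nat.sub_lt hkpos Nat.one_pos
  have hfinal : (g ^ (Nat.find hQ)) b = a := by
    conv_lhs => rw [hk']
    rw [pow_succ', Equiv.Perm.mul_apply, claim _ hlt, hg, Equiv.Perm.mul_apply,
      ← Equiv.Perm.mul_apply π (π ^ (Nat.find hQ - 1)), ← pow_succ', ← hk', hkfix,
      Equiv.swap_apply_right]
  exact ⟨((Nat.find hQ : ℕ) : ℤ), by simpa using hfinal⟩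


end GW

noncomputable def cyc {H : Type} (π : Equiv.Perm H) : ℕ := Nat.card (Quotient (sameCycleSetoid π))

namespace GW
variable {H : Type}

lemma eqvGen_le {r e : H → H → Prop} (he : Equivalence e) (h : ∀ x y, r x y → e x y) :
    ∀ x y, Relation.EqvGen r x y → e x y := by
  intro x y hxy
  induction hxy with
  | rel x y hr => exact h _ _ hr
  | refl x => exact he.refl x
  | symm x y _ ih => exact he.symm ih
  | trans x y z _ _ ih1 ih2 => exact he.trans ih1 ih2

def orbSetoid (s π : Equiv.Perm H) : Setoid H :=
  Relation.EqvGen.setoid (fun a b => s a = b ∨ π a = b)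

noncomputable def orbc (s π : Equiv.Perm H) : ℕ := Nat.card (Quotient (orbSetoid s π))

def eqSetoid (H : Type) : Setoid H := ⟨Eq, ⟨fun _ => rfl, fun h => h.symm, fun h h' => h.trans h'⟩⟩

lemma card_quot_eqSetoid (H : Type) : Nat.card (Quotient (eqSetoid H)) = Nat.card H := by
  apply Nat.card_congr
  refine Equiv.ofBijective (Quotient.lift id (fun a b h => h)) ⟨?_, fun y => ⟨Quotient.mk _ y, rfl⟩⟩
  rintro ⟨x⟩ ⟨y⟩ h
  exact Quotient.sound (h : x = y)

lemma sameCycle_fixed {s : Equiv.Perm H} {a y : H} (ha : s a = a) (h : s.SameCycle a y) :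
    y = a := by
  obtain ⟨k, hk⟩ := h
  rw [← hk, Equiv.Perm.zpow_apply_eq_self_of_apply_eq_self ha]

lemma sc_mul_le_eqvGen (s π : Equiv.Perm H) :
    ∀ x y, (s * π).SameCycle x y → Relation.EqvGen (fun a b => s a = b ∨ π a = b) x y := by
  apply sameCycle_subset (Relation.EqvGen.is_equivalence _)
  intro x
  exact Relation.EqvGen.trans _ _ _
    (Relation.EqvGen.rel _ _ (Or.inr rfl))
    (Relation.EqvGen.rel (π x) (s (π x)) (Or.inl rfl))

lemma cyc_le_card [Finite H] (s : Equiv.Perm H) {x₀ : H} (hx : s x₀ ≠ x₀) :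
    cyc s + 1 ≤ Nat.card H := by
  have := K_strict (eqSetoid H) (sameCycleSetoid s)
    (fun x y h => by rw [(h : x = y)])
    (a := x₀) (b := s x₀) ⟨1, by simp⟩ (fun h => hx (h : x₀ = s x₀).symm)
  rw [card_quot_eqSetoid] at this
  exact this

lemma cyc_eq_card [Finite H] {s : Equiv.Perm H} (hs : ∀ x, s x = x) :
    cyc s = Nat.card H := by
  refine (K_eq (eqSetoid H) (sameCycleSetoid s) (fun x y h => by rw [(h : x = y)]) ?_).symm.trans
    (card_quot_eqSetoid H)
  intro x y h
  exact (sameCycle_fixed (hs x) h).symm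

lemma main [Fintype H] [DecidableEq H] : ∀ (m : ℕ) (s π : Equiv.Perm H),
    (∀ x, s (s x) = x) →
    Nat.card H = cyc s + m →
    cyc s = Nat.card {x : H // s x = x} + m ∧
    cyc (s * π) + cyc π ≤ m + 2 * orbc s π := by
  intro m
  induction m with
  | zero =>
    intro s π hinvol hcard
    have hid : ∀ x, s x = x := by
      intro x
      by_contra hx
      have := cyc_le_card s hx
      omega
    have hs1 : s = 1 := Equiv.ext hid
    constructor
    · rw [Nat.card_congr (Equiv.subtypeUnivEquiv hid)]; omega
    · have h1 : cyc (s * π) = cyc π := by rw [hs1, one_mul]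
      have h2 : cyc π ≤ orbc s π := by
        refine K_le (orbSetoid s π) (sameCycleSetoid π) ?_
        refine eqvGen_le (sameCycle_equivalence π) ?_
        rintro x y (h | h)
        · rw [hid x] at h; rw [h]
        · exact ⟨1, by simpa using h⟩
      omega
  | succ m' ih =>
    intro s π hinvol hcard
    -- there is a non-fixed point
    obtain ⟨a, hsa⟩ : ∃ a, s a ≠ a := by
      by_contra hall
      push_neg at hall
      have := cyc_eq_card hall
      omega
    set τ := Equiv.swap a (s a) with hτ
    set s' := s * τ with hs'
    have f1 : s' a = a := by
      rw [hs', Equiv.Perm.mul_apply, hτ, Equiv.swap_apply_left, hinvol]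
    have f2 : s' (s a) = s a := by
      rw [hs', Equiv.Perm.mul_apply, hτ, Equiv.swap_apply_right]
    have f3 : ∀ x, x ≠ a → x ≠ s a → s' x = s x := by
      intro x hx1 hx2
      rw [hs', Equiv.Perm.mul_apply, hτ, Equiv.swap_apply_of_ne_of_ne hx1 hx2]
    have fsx : ∀ x, x ≠ a → x ≠ s a → s x ≠ a ∧ s x ≠ s a := by
      intro x hx1 hx2
      constructor
      · intro hc; apply hx2; rw [← hinvol x, hc]
      · intro hc; apply hx1
        have := congrArg s hc
        rwa [hinvol, hinvol] at this
    have f4 : ∀ x, s' (s' x) = x := by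
      intro x
      rcases eq_or_ne x a with rfl | hx1
      · rw [f1, f1]
      rcases eq_or_ne x (s a) with rfl | hx2
      · rw [f2, f2]
      · obtain ⟨h1, h2⟩ := fsx x hx1 hx2
        rw [f3 x hx1 hx2, f3 _ h1 h2, hinvol]
    have f5 : τ * s' = s := by
      apply Equiv.ext
      intro x
      rcases eq_or_ne x a with rfl | hx1
      · rw [Equiv.Perm.mul_apply, f1, hτ, Equiv.swap_apply_left]
      rcases eq_or_ne x (s a) with rfl | hx2
      · rw [Equiv.Perm.mul_apply, f2, hτ, Equiv.swap_apply_right, hinvol]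
      · obtain ⟨h1, h2⟩ := fsx x hx1 hx2
        rw [Equiv.Perm.mul_apply, f3 x hx1 hx2, hτ, Equiv.swap_apply_of_ne_of_ne h1 h2]
    have g1 : τ * (s * π) = s' * π := by
      rw [← f5, ← mul_assoc, ← mul_assoc, hτ, Equiv.swap_mul_self, one_mul]
    have g2 : τ * (s' * π) = s * π := by
      rw [← mul_assoc, f5]
    -- cycles of s' vs s
    have ss'le : ∀ x y, Equiv.Perm.SameCycle s' x y → Equiv.Perm.SameCycle s x y := by
      apply sameCycle_subset (sameCycle_equivalence s)
      intro x
      rcases eq_or_ne x a with rfl | hx1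
      · rw [f1]
      rcases eq_or_ne x (s a) with rfl | hx2
      · rw [f2]
      · rw [f3 x hx1 hx2]; exact ⟨1, by simp⟩
    have f6 : cyc s' = cyc s + 1 := by
      have hle1 : cyc s + 1 ≤ cyc s' := by
        have hab : Equiv.Perm.SameCycle s a (s a) := ⟨1, by simp⟩
        have hnab : ¬ Equiv.Perm.SameCycle s' a (s a) := by
          intro hc
          exact hsa (sameCycle_fixed (s := s') (a := a) f1 hc)
        exact K_strict (sameCycleSetoid s') (sameCycleSetoid s) ss'le hab hnab
      have hle2 : cyc s' ≤ cyc s + 1 := by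
        refine K_plus (sameCycleSetoid s') (sameCycleSetoid s) ss'le a (s a) ?_
        apply sameCycle_subset (T_equivalence (sameCycle_equivalence s') a (s a))
        intro x
        rcases eq_or_ne x a with rfl | hx1
        · exact Or.inr (Or.inl ⟨Equiv.Perm.SameCycle.refl _ _, Equiv.Perm.SameCycle.refl _ _⟩)
        rcases eq_or_ne x (s a) with rfl | hx2
        · refine Or.inr (Or.inr ⟨Equiv.Perm.SameCycle.refl _ _, ?_⟩)
          rw [hinvol]
        · exact Or.inl ⟨1, by simp [f3 x hx1 hx2]⟩
      omega
    have f7 : Nat.card H = cyc s' + m' := by omega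
    obtain ⟨ih1, ih2⟩ := ih s' π f4 f7
    constructor
    · -- fixed point counting
      have hFset : {x : H | s' x = x} = {x : H | s x = x} ∪ {a, s a} := by
        ext x
        simp only [Set.mem_setOf_eq, Set.mem_union, Set.mem_insert_iff, Set.mem_singleton_iff]
        rcases eq_or_ne x a with rfl | hx1
        · simp [f1]
        rcases eq_or_ne x (s a) with rfl | hx2
        · simp [f2]
        · rw [f3 x hx1 hx2]
          simp [hx1, hx2]
      have hdisj : Disjoint {x : H | s x = x} ({a, s a} : Set H) := by
        rw [Set.disjoint_right]
        rintro x (rfl | rfl)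
        · exact hsa
        · intro hc
          simp only [Set.mem_setOf_eq] at hc
          rw [hinvol] at hc
          exact hsa hc.symm
      have hF' : Nat.card {x : H // s' x = x} = Nat.card {x : H // s x = x} + 2 := by
        have e1 : Nat.card {x : H // s' x = x} = ({x : H | s' x = x} : Set H).ncard :=
          Nat.card_coe_set_eq _
        have e2 : Nat.card {x : H // s x = x} = ({x : H | s x = x} : Set H).ncard :=
          Nat.card_coe_set_eq _
        rw [e1, e2, hFset, Set.ncard_union_eq hdisj (Set.toFinite _) (Set.toFinite _),
          Set.ncard_pair (Ne.symm hsa)]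
      omega
    · -- the main inequality
      by_cases hcase : Equiv.Perm.SameCycle (s' * π) a (s a)
      · -- same cycle: split
        have c1 : cyc (s * π) ≤ cyc (s' * π) + 1 := by
          refine K_plus (sameCycleSetoid (s * π)) (sameCycleSetoid (s' * π)) ?_ a (s a) ?_
          · intro x y hxy
            have hc := core (s' * π) a (s a) x y (by rw [g2]; exact hxy)
            rcases hc with h | ⟨h1', h2'⟩ | ⟨h1', h2'⟩
            · exact h
            · exact (h1'.trans hcase).trans h2'
            · exact (h1'.trans hcase.symm).trans h2'
          · intro x y hxy
            exact core (s * π) a (s a) x y (by rw [g1]; exact hxy)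
        have o1 : orbc s π = orbc s' π := by
          refine K_eq (orbSetoid s π) (orbSetoid s' π) ?_ ?_
          · refine eqvGen_le (Relation.EqvGen.is_equivalence _) ?_
            rintro u y (h | h)
            · rcases eq_or_ne u a with hu | hx1
              · have hy : y = s a := by rw [← h, hu]
                rw [hu, hy]
                exact sc_mul_le_eqvGen s' π a (s a) hcase
              rcases eq_or_ne u (s a) with hu | hx2
              · have hy : y = a := by rw [← h, hu, hinvol]
                rw [hu, hy]
                exact Relation.EqvGen.symm _ _ (sc_mul_le_eqvGen s' π a (s a) hcase)
              · exact Relation.EqvGen.rel _ _ (Or.inl (by rw [f3 u hx1 hx2]; exact h))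
            · exact Relation.EqvGen.rel _ _ (Or.inr h)
          · refine eqvGen_le (Relation.EqvGen.is_equivalence _) ?_
            rintro u y (h | h)
            · rcases eq_or_ne u a with hu | hx1
              · have hy : y = a := by rw [← h, hu, f1]
                rw [hu, hy]
              rcases eq_or_ne u (s a) with hu | hx2
              · have hy : y = s a := by rw [← h, hu, f2]
                rw [hu, hy]
              · exact Relation.EqvGen.rel _ _ (Or.inl (by rw [← f3 u hx1 hx2]; exact h))
            · exact Relation.EqvGen.rel _ _ (Or.inr h)
        omega
      · -- different cycles: merge
        have hab2 : Equiv.Perm.SameCycle (s * π) a (s a) := by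
          have := chase (s' * π) (a := a) (b := s a) hcase
          rw [g2] at this
          exact this.symm
        have c2 : cyc (s * π) + 1 ≤ cyc (s' * π) := by
          refine K_strict (sameCycleSetoid (s' * π)) (sameCycleSetoid (s * π)) ?_
            (a := a) (b := s a) hab2 hcase
          intro x y hxy
          have hc := core (s * π) a (s a) x y (by rw [g1]; exact hxy)
          rcases hc with h | ⟨h1', h2'⟩ | ⟨h1', h2'⟩
          · exact h
          · exact (h1'.trans hab2).trans h2'
          · exact (h1'.trans hab2.symm).trans h2'
        have o2 : orbc s' π ≤ orbc s π + 1 := by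
          refine K_plus (orbSetoid s' π) (orbSetoid s π) ?_ a (s a) ?_
          · refine eqvGen_le (Relation.EqvGen.is_equivalence _) ?_
            rintro u y (h | h)
            · rcases eq_or_ne u a with hu | hx1
              · have hy : y = a := by rw [← h, hu, f1]
                rw [hu, hy]
              rcases eq_or_ne u (s a) with hu | hx2
              · have hy : y = s a := by rw [← h, hu, f2]
                rw [hu, hy]
              · exact Relation.EqvGen.rel _ _ (Or.inl (by rw [← f3 u hx1 hx2]; exact h))
            · exact Relation.EqvGen.rel _ _ (Or.inr h)
          · refine eqvGen_le (T_equivalence (Relation.EqvGen.is_equivalence _) a (s a)) ?_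
            rintro u y (h | h)
            · rcases eq_or_ne u a with hu | hx1
              · have hy : y = s a := by rw [← h, hu]
                refine Or.inr (Or.inl ⟨?_, ?_⟩)
                · rw [hu]
                · rw [hy]
              rcases eq_or_ne u (s a) with hu | hx2
              · have hy : y = a := by rw [← h, hu, hinvol]
                refine Or.inr (Or.inr ⟨?_, ?_⟩)
                · rw [hu]
                · rw [hy]
              · exact Or.inl (Relation.EqvGen.rel _ _ (Or.inl (by rw [f3 u hx1 hx2]; exact h)))
            · exact Or.inl (Relation.EqvGen.rel _ _ (Or.inr h))
        omega

end GW


/-- For any finite tree with `n` edges, the Green walk is a single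
closed walk of length `2 n`: every half-edge lies on the same Green walk and the
walk first returns to its start after exactly `2 n` steps (so it traverses each of
the `2 n` half-edges exactly once). -/
theorem tree_green_walk_single_of_length_two_mul
    (H : Type) [Fintype H] [Nonempty H] (G : RibbonGraph H) (n : ℕ)
    (hE : G.numEdges = n) (hTree : G.IsTree) :
    (∀ x y : H, G.step.SameCycle x y) ∧
      (∀ x : H, Function.minimalPeriod (⇑G.step) x = 2 * n) := by
  classical
  have hcyc_le : cyc G.sigma ≤ Nat.card H :=
    Nat.card_le_card_of_surjective (Quotient.mk (sameCycleSetoid G.sigma))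
      (fun q => q.exists_rep)
  have hm : Nat.card H = cyc G.sigma + (Nat.card H - cyc G.sigma) := by omega
  obtain ⟨hFix, hIneq⟩ := GW.main (Nat.card H - cyc G.sigma) G.sigma G.rho G.invol hm
  have hF0 : Nat.card {x : H // G.sigma x = x} = 0 := by
    haveI : IsEmpty {x : H // G.sigma x = x} := ⟨fun ⟨x, hx⟩ => G.noFix x hx⟩
    exact Nat.card_of_isEmpty
  have hEn : cyc G.sigma = n := hE ▸ rfl
  have hVn : cyc G.rho = n + 1 := by
    have h1 : G.numVertices = cyc G.rho := rfl
    rw [← h1, hTree, hE]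
  have hmn : Nat.card H - cyc G.sigma = n := by omega
  have hcardH : Nat.card H = 2 * n := by omega
  have horb : GW.orbc G.sigma G.rho = 1 := by
    rw [GW.orbc, Nat.card_eq_one_iff_unique]
    constructor
    · constructor
      intro q q'
      refine Quotient.inductionOn₂ q q' (fun x y => Quotient.sound ?_)
      exact G.conn x y
    · exact Nonempty.map (Quotient.mk _) ‹Nonempty H›
  have hle1 : cyc (G.sigma * G.rho) ≤ 1 := by
    rw [hVn, horb, hmn] at hIneq
    omega
  have hge1 : 1 ≤ cyc (G.sigma * G.rho) := by
    have : Nonempty (Quotient (sameCycleSetoid (G.sigma * G.rho))) :=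
      Nonempty.map (Quotient.mk _) ‹Nonempty H›
    exact Nat.card_pos
  have hone : cyc (G.sigma * G.rho) = 1 := le_antisymm hle1 hge1
  have hmul : G.sigma * G.rho = G.step := rfl
  have halls : ∀ x y : H, G.step.SameCycle x y := by
    intro x y
    by_contra hxy
    have hnt : Nontrivial (Quotient (sameCycleSetoid (G.sigma * G.rho))) := by
      refine ⟨Quotient.mk _ x, Quotient.mk _ y, fun hq => ?_⟩
      exact hxy (hmul ▸ (Quotient.exact hq : (sameCycleSetoid (G.sigma * G.rho)).r x y))
    have h2 : 1 < cyc (G.sigma * G.rho) := @Finite.one_lt_card _ _ hnt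
    omega
  refine ⟨halls, fun x => ?_⟩
  have hpos : 0 < Function.minimalPeriod (⇑G.step) x := by
    refine Function.IsPeriodicPt.minimalPeriod_pos (orderOf_pos G.step) ?_
    show (⇑G.step)^[orderOf G.step] x = x
    rw [Equiv.Perm.iterate_eq_pow, pow_orderOf_eq_one]
    rfl
  set m := Function.minimalPeriod (⇑G.step) x with hmdef
  have hinj : Function.Injective (fun i : Fin m => (⇑G.step)^[i.1] x) := by
    intro i j hij
    exact Fin.ext (Function.iterate_injOn_Iio_minimalPeriod
      (Set.mem_Iio.mpr i.2) (Set.mem_Iio.mpr j.2) hij)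
  have hsurj : Function.Surjective (fun i : Fin m => (⇑G.step)^[i.1] x) := by
    intro y
    obtain ⟨i, hi, hiy⟩ := (halls x y).exists_pow_eq'
    refine ⟨⟨i % m, Nat.mod_lt _ hpos⟩, ?_⟩
    show (⇑G.step)^[i % m] x = y
    rw [Function.iterate_mod_minimalPeriod_eq, Equiv.Perm.iterate_eq_pow, hiy]
  have h1 : m ≤ Fintype.card H := by
    have := Fintype.card_le_of_injective _ hinj
    simpa using this
  have h2 : Fintype.card H ≤ m := by
    have := Fintype.card_le_of_surjective _ hsurj
    simpa using this
  have h3 : Nat.card H = Fintype.card H := Nat.card_eq_fintype_card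
  omega
end

section
/- For a finite tree with n edges, the unique Green walk (of length 2n) splits into exactly two distinct double-stepped Green walks, each of length n. -/
open Relation
set_option linter.unusedSectionVars false

variable {H : Type} [Fintype H] [DecidableEq H]

/-- Coarser setoids have fewer classes. -/
lemma tdg_card_quot_le {s t : Setoid H} (h : s ≤ t) :
    Nat.card (Quotient t) ≤ Nat.card (Quotient s) :=
  Nat.card_le_card_of_surjective (Setoid.map_of_le h)
    (fun q => Quotient.inductionOn q (fun x => ⟨Quotient.mk s x, rfl⟩))

/-- Orbit equivalence of a permutation is contained in any equivalence closed under the step. -/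
lemma tdg_sameCycle_le (π : Equiv.Perm H) (s : Setoid H) (h : ∀ x, s x (π x)) :
    ∀ x y, π.SameCycle x y → s x y := by
  have key : ∀ (i : ℕ) (x : H), s x ((π ^ i) x) := by
    intro i
    induction i with
    | zero => intro x; simpa using s.refl x
    | succ i ih =>
      intro x
      have : (π ^ (i+1)) x = π ((π ^ i) x) := by
        rw [pow_succ']; rfl
      rw [this]
      exact s.trans (ih x) (h _)
  intro x y hxy
  obtain ⟨i, _, hi⟩ := hxy.exists_pow_eq'
  exact hi ▸ key i x

/-- The setoid generated by an equivalence plus one extra pair. -/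
def tdgJoin (s : Setoid H) (a b : H) : Setoid H :=
  EqvGen.setoid (fun x y => s x y ∨ (x = a ∧ y = b))

lemma tdgJoin_le (s : Setoid H) (a b : H) : s ≤ tdgJoin s a b :=
  fun _ _ h => EqvGen.rel _ _ (Or.inl h)

lemma tdgJoin_rel (s : Setoid H) (a b : H) : (tdgJoin s a b) a b :=
  EqvGen.rel _ _ (Or.inr ⟨rfl, rfl⟩)

lemma tdgJoin_cases {s : Setoid H} {a b x y : H} (h : (tdgJoin s a b) x y) :
    s x y ∨ ((s x a ∨ s x b) ∧ (s y a ∨ s y b)) := by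
  induction h with
  | rel u v huv =>
    rcases huv with h' | ⟨ha, hb⟩
    · exact Or.inl h'
    · exact Or.inr ⟨Or.inl (by rw [ha]), Or.inr (by rw [hb])⟩
  | refl u => exact Or.inl (s.refl u)
  | symm u v _ ih =>
    rcases ih with h' | ⟨h1, h2⟩
    · exact Or.inl (s.symm h')
    · exact Or.inr ⟨h2, h1⟩
  | trans u v w _ _ ih1 ih2 =>
    rcases ih1 with h1 | ⟨h1a, h1b⟩
    · rcases ih2 with h2 | ⟨h2a, h2b⟩
      · exact Or.inl (s.trans h1 h2)
      · exact Or.inr ⟨h2a.imp (s.trans h1) (s.trans h1), h2b⟩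
    · rcases ih2 with h2 | ⟨h2a, h2b⟩
      · exact Or.inr ⟨h1a, h1b.imp (fun hv => s.trans (s.symm h2) hv) (fun hv => s.trans (s.symm h2) hv)⟩
      · exact Or.inr ⟨h1a, h2b⟩

/-- Number of cycles of a permutation. -/
noncomputable def tdgC (π : Equiv.Perm H) : ℕ := Nat.card (Quotient (sameCycleSetoid π))

lemma tdg_card_join (s : Setoid H) (a b : H) :
    Nat.card (Quotient s) ≤ Nat.card (Quotient (tdgJoin s a b)) + 1 := by
  classical
  haveI : Fintype (Quotient s) := Fintype.ofFinite _
  haveI : Fintype (Quotient (tdgJoin s a b)) := Fintype.ofFinite _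
  set q : Quotient s → Quotient (tdgJoin s a b) := Setoid.map_of_le (tdgJoin_le s a b) with hq
  have hqmk : ∀ x : H, q (Quotient.mk s x) = Quotient.mk (tdgJoin s a b) x := fun x => rfl
  have hinj : Set.InjOn q (Finset.univ.erase (Quotient.mk s b) : Finset (Quotient s)) := by
    intro z hz w hw hzw
    obtain ⟨x, rfl⟩ := Quotient.exists_rep z
    obtain ⟨y, rfl⟩ := Quotient.exists_rep w
    have hz' : ¬ s x b := fun h => (Finset.mem_erase.mp hz).1 (Quotient.sound h)
    have hw' : ¬ s y b := fun h => (Finset.mem_erase.mp hw).1 (Quotient.sound h)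
    have hxy : (tdgJoin s a b) x y := Quotient.exact hzw
    rcases tdgJoin_cases hxy with h | ⟨hx, hy⟩
    · exact Quotient.sound h
    · have hxa : s x a := hx.resolve_right hz'
      have hya : s y a := hy.resolve_right hw'
      exact Quotient.sound (s.trans hxa (s.symm hya))
  have hcard : (Finset.univ.erase (Quotient.mk s b)).card ≤ Fintype.card (Quotient (tdgJoin s a b)) := by
    have := Finset.card_le_card_of_injOn q (fun x _ => Finset.mem_univ _) hinj
    simpa using this
  have h1 : (Finset.univ.erase (Quotient.mk s b)).card = Fintype.card (Quotient s) - 1 := by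
    rw [Finset.card_erase_of_mem (Finset.mem_univ _)]; rfl
  have h2 : 1 ≤ Fintype.card (Quotient s) := Fintype.card_pos_iff.mpr ⟨Quotient.mk s b⟩
  rw [Nat.card_eq_fintype_card, Nat.card_eq_fintype_card]
  omega

lemma tdg_card_swap_mul_le (π : Equiv.Perm H) (a b : H) :
    tdgC (Equiv.swap a b * π) ≤ tdgC π + 1 := by
  classical
  set τ := Equiv.swap a b with hτ
  set u := sameCycleSetoid (τ * π) with hu
  have hle : sameCycleSetoid π ≤ tdgJoin u a b := by
    intro x y hxy
    refine tdg_sameCycle_le π (tdgJoin u a b) (fun z => ?_) x y hxy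
    have h1 : (tdgJoin u a b) z ((τ * π) z) := tdgJoin_le u a b ⟨1, by simp⟩
    have hτπ : (τ * π) z = τ (π z) := rfl
    by_cases hza : π z = a
    · have : (τ * π) z = b := by rw [hτπ, hza, Equiv.swap_apply_left]
      rw [this] at h1
      exact (tdgJoin u a b).trans h1 ((tdgJoin u a b).symm (hza ▸ tdgJoin_rel u a b))
    · by_cases hzb : π z = b
      · have : (τ * π) z = a := by rw [hτπ, hzb, Equiv.swap_apply_right]
        rw [this] at h1
        exact (tdgJoin u a b).trans h1 (hzb ▸ tdgJoin_rel u a b)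
      · have : (τ * π) z = π z := by rw [hτπ, Equiv.swap_apply_of_ne_of_ne hza hzb]
        rwa [this] at h1
  have h2 := tdg_card_quot_le hle
  have h3 := tdg_card_join u a b
  unfold tdgC
  rw [← hu]
  omega

lemma tdg_swap_mul_sameCycle (π : Equiv.Perm H) {a b : H}
    (h : ¬ π.SameCycle a b) : (Equiv.swap a b * π).SameCycle b a := by
  classical
  set τ := Equiv.swap a b with hτ
  set r := Function.minimalPeriod (⇑π) b with hr
  have hper : b ∈ Function.periodicPts (⇑π) :=
    ⟨orderOf π, orderOf_pos π, by
      show (⇑π)^[orderOf π] b = b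
      rw [← Equiv.Perm.coe_pow, pow_orderOf_eq_one]; rfl⟩
  have hrpos : 0 < r := Function.minimalPeriod_pos_of_mem_periodicPts hper
  have key : ∀ j, j < r → ((τ * π) ^ j) b = (π ^ j) b := by
    intro j
    induction j with
    | zero => intro _; simp
    | succ j ih =>
      intro hj
      have hj' : j < r := Nat.lt_of_succ_lt hj
      have h1 : ((τ * π) ^ (j+1)) b = (τ * π) (((τ * π) ^ j) b) := by
        rw [pow_succ']; rfl
      rw [h1, ih hj']
      have h2 : (τ * π) ((π ^ j) b) = τ ((π ^ (j+1)) b) := by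
        rw [pow_succ']; rfl
      rw [h2]
      have hna : (π ^ (j+1)) b ≠ a := by
        intro hcon
        exact h ((Equiv.Perm.SameCycle.symm ⟨(j+1 : ℕ), by rw [zpow_natCast, hcon]⟩))
      have hnb : (π ^ (j+1)) b ≠ b := by
        intro hcon
        have : Function.IsPeriodicPt (⇑π) (j+1) b := by
          show (⇑π)^[j+1] b = b
          rw [← Equiv.Perm.coe_pow]; exact hcon
        have := this.minimalPeriod_le (Nat.succ_pos j)
        omega
      exact Equiv.swap_apply_of_ne_of_ne hna hnb
  have hfinal : ((τ * π) ^ r) b = a := by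
    have h1 : ((τ * π) ^ r) b = (τ * π) (((τ * π) ^ (r-1)) b) := by
      conv_lhs => rw [show r = (r-1) + 1 by omega, pow_succ']
      rfl
    rw [h1, key (r-1) (by omega)]
    have h2 : (τ * π) ((π ^ (r-1)) b) = τ ((π ^ r) b) := by
      conv_rhs => rw [show r = (r-1) + 1 by omega, pow_succ']
      rfl
    rw [h2]
    have h3 : (π ^ r) b = b := by
      have := Function.isPeriodicPt_minimalPeriod (⇑π) b
      rw [← hr] at this
      have h4 : (⇑π)^[r] b = b := this
      rw [← Equiv.Perm.coe_pow] at h4; exact h4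
    rw [h3, Equiv.swap_apply_right]
  exact ⟨(r : ℤ), by rw [zpow_natCast, hfinal]⟩

lemma tdg_card_swap_mul_lt (π : Equiv.Perm H) {a b : H}
    (h : ¬ π.SameCycle a b) : tdgC (Equiv.swap a b * π) + 1 ≤ tdgC π := by
  classical
  set τ := Equiv.swap a b with hτ
  set u := sameCycleSetoid (τ * π) with hu
  have hmerge : (τ * π).SameCycle a b := (tdg_swap_mul_sameCycle π h).symm
  have hle : sameCycleSetoid π ≤ u := by
    intro x y hxy
    refine tdg_sameCycle_le π u (fun z => ?_) x y hxy
    have h1 : u z ((τ * π) z) := ⟨1, by simp⟩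
    have hτπ : (τ * π) z = τ (π z) := rfl
    by_cases hza : π z = a
    · have : (τ * π) z = b := by rw [hτπ, hza, Equiv.swap_apply_left]
      rw [this] at h1
      exact u.trans h1 (hza ▸ u.symm hmerge)
    · by_cases hzb : π z = b
      · have : (τ * π) z = a := by rw [hτπ, hzb, Equiv.swap_apply_right]
        rw [this] at h1
        exact u.trans h1 (hzb ▸ hmerge)
      · have : (τ * π) z = π z := by rw [hτπ, Equiv.swap_apply_of_ne_of_ne hza hzb]
        rwa [this] at h1
  haveI : Fintype (Quotient u) := Fintype.ofFinite _
  haveI : Fintype (Quotient (sameCycleSetoid π)) := Fintype.ofFinite _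
  set q : Quotient (sameCycleSetoid π) → Quotient u := Setoid.map_of_le hle with hq
  have hsurj : Function.Surjective q :=
    fun z => Quotient.inductionOn z (fun x => ⟨Quotient.mk _ x, rfl⟩)
  have hninj : ¬ Function.Injective q := by
    intro hinj
    have : Quotient.mk (sameCycleSetoid π) a = Quotient.mk (sameCycleSetoid π) b :=
      hinj (Quotient.sound hmerge)
    exact h (Quotient.exact this)
  have := Fintype.card_lt_of_surjective_not_injective q hsurj hninj
  unfold tdgC
  rw [← hu]
  rw [Nat.card_eq_fintype_card, Nat.card_eq_fintype_card]
  omega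


namespace RibbonGraph

variable {H : Type} [Fintype H] [DecidableEq H]

/-- The partial pairing that only swaps half-edges in a `sigma`-invariant set `s`. -/
def pSigma (G : RibbonGraph H) (s : Finset H) (hs : ∀ x ∈ s, G.sigma x ∈ s) :
    Equiv.Perm H :=
  Function.Involutive.toPerm (fun x => if x ∈ s then G.sigma x else x) (by
    intro x
    by_cases hx : x ∈ s
    · simp only [hx, if_true, hs x hx, G.invol x]
    · simp only [hx, if_false])

lemma pSigma_apply (G : RibbonGraph H) (s : Finset H) (hs : ∀ x ∈ s, G.sigma x ∈ s) (x : H) :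
    G.pSigma s hs x = if x ∈ s then G.sigma x else x := rfl

/-- The connectivity setoid using only edges whose half-edges lie in `s`. -/
def pConn (G : RibbonGraph H) (s : Finset H) : Setoid H :=
  Relation.EqvGen.setoid (fun x y => G.rho x = y ∨ (x ∈ s ∧ G.sigma x = y))

/-- The Euler-type invariant, by induction on the set of used edges. -/
lemma euler_invariant (G : RibbonGraph H) :
    ∀ (m : ℕ) (s : Finset H) (hs : ∀ x ∈ s, G.sigma x ∈ s), s.card = m →
      2 * tdgC (G.pSigma s hs * G.rho) + 2 * G.numVertices ≤
        4 * Nat.card (Quotient (G.pConn s)) + m := by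
  intro m
  induction m using Nat.strong_induction_on with
  | _ m IH =>
    intro s hs hcard
    rcases Nat.eq_zero_or_pos m with hm | hm
    · -- base case : s = ∅
      subst hm
      have hsempty : s = ∅ := Finset.card_eq_zero.mp hcard
      subst hsempty
      have hσ1 : G.pSigma ∅ hs = 1 := by
        ext x; simp [pSigma_apply]
      have hπ : G.pSigma ∅ hs * G.rho = G.rho := by rw [hσ1, one_mul]
      have hK : G.pConn ∅ = sameCycleSetoid G.rho := by
        apply le_antisymm
        · exact Setoid.eqvGen_le (fun x y h => by
            rcases h with h | ⟨h, _⟩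
            · exact ⟨1, by simpa using h⟩
            · simp at h)
        · intro x y hxy
          exact tdg_sameCycle_le G.rho (G.pConn ∅)
            (fun z => Relation.EqvGen.rel _ _ (Or.inl rfl)) x y hxy
      rw [hπ, hK]
      have h1 : tdgC G.rho = G.numVertices := rfl
      have h2 : G.numVertices = Nat.card (Quotient (sameCycleSetoid G.rho)) := rfl
      rw [h1, h2]
      omega
    · -- inductive step : pick an edge {a, sigma a} in s
      have hne : s.Nonempty := Finset.card_pos.mp (by omega)
      obtain ⟨a, ha⟩ := hne
      set b := G.sigma a with hb
      have hbs : b ∈ s := hs a ha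
      have hab : a ≠ b := by
        intro h
        exact G.noFix a (by rw [hb] at h; exact h.symm)
      have hσb : G.sigma b = a := G.invol a
      set s' := (s.erase a).erase b with hs'
      have has' : a ∉ s' := fun h => (Finset.mem_erase.mp (Finset.mem_erase.mp h).2).1 rfl
      have hbs' : b ∉ s' := fun h => (Finset.mem_erase.mp h).1 rfl
      have hmem : ∀ x, x ∈ s ↔ x ∈ s' ∨ x = a ∨ x = b := by
        intro x
        constructor
        · intro hx
          by_cases h1 : x = a
          · exact Or.inr (Or.inl h1)
          · by_cases h2 : x = b
            · exact Or.inr (Or.inr h2)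
            · exact Or.inl (by simp [hs', Finset.mem_erase, h1, h2, hx])
        · rintro (hx | rfl | rfl)
          · exact Finset.mem_of_mem_erase (Finset.mem_of_mem_erase hx)
          · exact ha
          · exact hbs
      have hσinj : Function.Injective (⇑G.sigma) := G.sigma.injective
      have hs'inv : ∀ x ∈ s', G.sigma x ∈ s' := by
        intro x hx
        have hxs : x ∈ s := Finset.mem_of_mem_erase (Finset.mem_of_mem_erase hx)
        have h1 : G.sigma x ≠ a := by
          intro h
          apply hbs'
          have : x = b := by rw [← hσb] at h; exact hσinj h
          exact this ▸ hx
        have h2 : G.sigma x ≠ b := by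
          intro h
          apply has'
          have : x = a := by rw [hb] at h; exact hσinj h
          exact this ▸ hx
        simp [hs', Finset.mem_erase, h1, h2, hs x hxs]
      have hcard' : s'.card = m - 2 := by
        rw [hs', Finset.card_erase_of_mem (Finset.mem_erase.mpr ⟨Ne.symm hab, hbs⟩),
          Finset.card_erase_of_mem ha, hcard]
        omega
      have hm2 : 2 ≤ m := by
        have := Finset.one_lt_card.mpr ⟨a, ha, b, hbs, hab⟩
        omega
      -- decompose the partial pairing
      have hσdec : G.pSigma s hs = Equiv.swap a b * G.pSigma s' hs'inv := by
        ext x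
        rw [pSigma_apply]
        have hrhs : (Equiv.swap a b * G.pSigma s' hs'inv) x
            = Equiv.swap a b (G.pSigma s' hs'inv x) := rfl
        rw [hrhs, pSigma_apply]
        by_cases h1 : x = a
        · subst h1
          simp [has', hb, ha, Equiv.swap_apply_left]
        · by_cases h2 : x = b
          · subst h2
            simp [hbs', hbs, hσb, Equiv.swap_apply_right]
          · by_cases h3 : x ∈ s'
            · have hxs : x ∈ s := (hmem x).mpr (Or.inl h3)
              have g1 : G.sigma x ≠ a := fun h => h2 (by rw [← hσb] at h; exact hσinj h)
              have g2 : G.sigma x ≠ b := fun h => h1 (by rw [hb] at h; exact hσinj h)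
              simp [h3, hxs, Equiv.swap_apply_of_ne_of_ne g1 g2]
            · have hxs : x ∉ s := fun h => by
                rcases (hmem x).mp h with h' | h' | h' <;> [exact h3 h'; exact h1 h'; exact h2 h']
              simp [h3, hxs, Equiv.swap_apply_of_ne_of_ne h1 h2]
      -- the connectivity setoid is the join
      have hKdec : G.pConn s = tdgJoin (G.pConn s') a b := by
        apply le_antisymm
        · apply Setoid.eqvGen_le
          intro x y hxy
          rcases hxy with h | ⟨hx, h⟩
          · exact Relation.EqvGen.rel _ _ (Or.inl (Relation.EqvGen.rel _ _ (Or.inl h)))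
          · rcases (hmem x).mp hx with h' | h' | h'
            · exact Relation.EqvGen.rel _ _ (Or.inl (Relation.EqvGen.rel _ _ (Or.inr ⟨h', h⟩)))
            · have hy : y = b := by simp only [← h, h', hb]
              rw [h', hy]
              exact tdgJoin_rel _ _ _
            · have hy : y = a := by simp only [← h, h', hσb]
              rw [h', hy]
              exact (tdgJoin (G.pConn s') a b).symm (tdgJoin_rel _ _ _)
        · apply Setoid.eqvGen_le
          intro x y hxy
          rcases hxy with h | ⟨rfl, rfl⟩
          · exact Relation.EqvGen.mono (r := fun x y => G.rho x = y ∨ (x ∈ s' ∧ G.sigma x = y))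
              (p := fun x y => G.rho x = y ∨ (x ∈ s ∧ G.sigma x = y))
              (fun u v huv => huv.imp id (fun ⟨h1, h2⟩ =>
                ⟨Finset.mem_of_mem_erase (Finset.mem_of_mem_erase h1), h2⟩)) _ _ h
          · exact Relation.EqvGen.rel _ _ (Or.inr ⟨ha, rfl⟩)
      have hIH := IH (m - 2) (by omega) s' hs'inv hcard'
      -- π-step containment : cycles of the partial walk refine components
      have hstep : ∀ x y, (G.pSigma s' hs'inv * G.rho).SameCycle x y → (G.pConn s') x y := by
        apply tdg_sameCycle_le
        intro z
        have h1 : (G.pConn s') z (G.rho z) := Relation.EqvGen.rel _ _ (Or.inl rfl)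
        have happ : (G.pSigma s' hs'inv * G.rho) z = G.pSigma s' hs'inv (G.rho z) := rfl
        rw [happ, pSigma_apply]
        by_cases hz : G.rho z ∈ s'
        · simp only [hz, if_true]
          exact (G.pConn s').trans h1 (Relation.EqvGen.rel _ _ (Or.inr ⟨hz, rfl⟩))
        · simp only [hz, if_false]
          exact h1
      by_cases hK' : (G.pConn s') a b
      · -- same component : component count unchanged, cycles change by at most one
        have hKeq : tdgJoin (G.pConn s') a b = G.pConn s' := by
          apply le_antisymm
          · exact Setoid.eqvGen_le (fun x y h => by
              rcases h with h | ⟨rfl, rfl⟩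
              · exact h
              · exact hK')
          · exact tdgJoin_le _ _ _
        have hM1 := tdg_card_swap_mul_le (G.pSigma s' hs'inv * G.rho) a b
        rw [hσdec, mul_assoc, hKdec, hKeq]
        omega
      · -- different components : components merge, cycles drop
        have hnc : ¬ (G.pSigma s' hs'inv * G.rho).SameCycle a b :=
          fun h => hK' (hstep a b h)
        have hM2 := tdg_card_swap_mul_lt (G.pSigma s' hs'inv * G.rho) hnc
        have hJ := tdg_card_join (G.pConn s') a b
        rw [hσdec, mul_assoc, hKdec]
        omega


lemma sigma_sameCycle_iff (G : RibbonGraph H) (x y : H) :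
    G.sigma.SameCycle x y ↔ y = x ∨ y = G.sigma x := by
  constructor
  · rintro ⟨i, hi⟩
    have hσ2 : G.sigma ^ (2:ℤ) = 1 := by
      rw [zpow_two]
      ext z
      exact G.invol z
    rcases Int.even_or_odd i with ⟨k, hk⟩ | ⟨k, hk⟩
    · left
      rw [← hi, hk, ← two_mul, zpow_mul, hσ2, one_zpow, Equiv.Perm.one_apply]
    · right
      rw [← hi, hk, zpow_add, zpow_mul, hσ2, one_zpow, zpow_one, Equiv.Perm.mul_apply,
        Equiv.Perm.one_apply]
  · rintro (rfl | rfl)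
    · exact Equiv.Perm.SameCycle.refl _ _
    · exact ⟨1, by simp⟩

lemma card_eq_two_mul_numEdges (G : RibbonGraph H) : Fintype.card H = 2 * G.numEdges := by
  classical
  set Q := Quotient (sameCycleSetoid G.sigma)
  have hbij : Function.Bijective
      (fun p : Q × Bool => cond p.2 p.1.out (G.sigma p.1.out)) := by
    constructor
    · rintro ⟨q, u⟩ ⟨q', u'⟩ h
      simp only [] at h
      have houtne : ∀ r : Q, r.out ≠ G.sigma r.out := fun r hr => G.noFix r.out hr.symm
      have hqq : ∀ r r' : Q, r.out = G.sigma r'.out → r = r' := by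
        intro r r' hr
        have : G.sigma.SameCycle r'.out r.out := ⟨1, by simp [hr]⟩
        have h2 : (⟦r'.out⟧ : Q) = (⟦r.out⟧ : Q) := Quotient.sound this
        rw [Quotient.out_eq, Quotient.out_eq] at h2
        exact h2.symm
      cases u <;> cases u'
      · exact Prod.ext (Quotient.out_injective (G.sigma.injective
          (show G.sigma q.out = G.sigma q'.out from h))) rfl
      · exfalso
        have hq : G.sigma q.out = q'.out := h
        rw [hqq q' q hq.symm] at hq
        exact houtne q hq.symm
      · exfalso
        have hq : q.out = G.sigma q'.out := h
        rw [hqq q q' hq] at hq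
        exact houtne q' hq
      · exact Prod.ext (Quotient.out_injective (show q.out = q'.out from h)) rfl
    · intro x
      have hrel := Quotient.mk_out (s := sameCycleSetoid G.sigma) x
      have : x = (⟦x⟧ : Q).out ∨ x = G.sigma (⟦x⟧ : Q).out :=
        (G.sigma_sameCycle_iff _ _).mp hrel
      rcases this with h | h
      · exact ⟨(⟦x⟧, true), h.symm⟩
      · exact ⟨(⟦x⟧, false), h.symm⟩
  have := Nat.card_eq_of_bijective _ hbij
  rw [Nat.card_prod, Nat.card_eq_fintype_card (α := Bool), Fintype.card_bool] at this
  rw [← Nat.card_eq_fintype_card (α := H), ← this, numEdges, mul_comm]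

lemma step_eq_mul (G : RibbonGraph H) : G.step = G.sigma * G.rho := rfl

lemma step_cycles_le_one [Nonempty H] (G : RibbonGraph H) (hTree : G.IsTree) :
    tdgC G.step ≤ 1 := by
  classical
  have hs : ∀ x ∈ (Finset.univ : Finset H), G.sigma x ∈ (Finset.univ : Finset H) :=
    fun x _ => Finset.mem_univ _
  have hινv := G.euler_invariant ((Finset.univ : Finset H).card) Finset.univ hs rfl
  have hσu : G.pSigma Finset.univ hs = G.sigma := by
    ext x
    simp [pSigma_apply]
  have hKuniv : Nat.card (Quotient (G.pConn Finset.univ)) = 1 := by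
    rw [Nat.card_eq_one_iff_unique]
    constructor
    · constructor
      intro q q'
      obtain ⟨x, rfl⟩ := Quotient.exists_rep q
      obtain ⟨y, rfl⟩ := Quotient.exists_rep q'
      apply Quotient.sound
      exact Relation.EqvGen.mono (r := fun a b => G.sigma a = b ∨ G.rho a = b)
        (p := fun x y => G.rho x = y ∨ (x ∈ (Finset.univ : Finset H) ∧ G.sigma x = y)) (fun u v huv => by
        rcases huv with h | h
        · exact Or.inr ⟨Finset.mem_univ u, h⟩
        · exact Or.inl h) _ _ (G.conn x y)
    · exact ⟨Quotient.mk (G.pConn Finset.univ) (Classical.arbitrary H)⟩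
  have hVE : G.numVertices = G.numEdges + 1 := hTree
  have hcardH : (Finset.univ : Finset H).card = 2 * G.numEdges := by
    rw [Finset.card_univ, G.card_eq_two_mul_numEdges]
  rw [hσu, hKuniv, hcardH, ← step_eq_mul, hVE] at hινv
  omega

lemma step_sameCycle_total [Nonempty H] (G : RibbonGraph H) (hTree : G.IsTree) :
    ∀ x y : H, G.step.SameCycle x y := by
  have h1 := G.step_cycles_le_one hTree
  haveI : Nonempty (Quotient (sameCycleSetoid G.step)) :=
    ⟨Quotient.mk (sameCycleSetoid G.step) (Classical.arbitrary H)⟩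
  have h2 : 0 < tdgC G.step := Nat.card_pos
  have h3 : tdgC G.step = 1 := by omega
  rw [tdgC, Nat.card_eq_one_iff_unique] at h3
  haveI := h3.1
  intro x y
  exact Quotient.exact (Subsingleton.elim
    (Quotient.mk (sameCycleSetoid G.step) x) (Quotient.mk (sameCycleSetoid G.step) y))

end RibbonGraph

lemma tdg_minimalPeriod_eq_card (π : Equiv.Perm H) (htot : ∀ x y, π.SameCycle x y) (x : H) :
    Function.minimalPeriod (⇑π) x = Fintype.card H := by
  set m := Function.minimalPeriod (⇑π) x with hm
  have hper : x ∈ Function.periodicPts (⇑π) :=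
    ⟨orderOf π, orderOf_pos π, by
      show (⇑π)^[orderOf π] x = x
      rw [← Equiv.Perm.coe_pow, pow_orderOf_eq_one]; rfl⟩
  have hmpos : 0 < m := Function.minimalPeriod_pos_of_mem_periodicPts hper
  have hinj : Function.Injective (fun i : Fin m => (⇑π)^[i.1] x) := by
    intro i j hij
    exact Fin.ext (Function.iterate_injOn_Iio_minimalPeriod
      (Set.mem_Iio.mpr i.2) (Set.mem_Iio.mpr j.2) hij)
  have hsurj : Function.Surjective (fun i : Fin m => (⇑π)^[i.1] x) := by
    intro y
    obtain ⟨i, _, hi⟩ := (htot x y).exists_pow_eq'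
    refine ⟨⟨i % m, Nat.mod_lt _ hmpos⟩, ?_⟩
    show (⇑π)^[i % m] x = y
    rw [Function.iterate_mod_minimalPeriod_eq, ← Equiv.Perm.coe_pow]
    exact hi
  have hcard := Fintype.card_of_bijective ⟨hinj, hsurj⟩
  simpa using hcard


/-- For a finite tree with `n` edges, the unique Green walk (of
length `2 n`) splits into exactly two distinct double-stepped Green walks, each of
length `n`. -/
theorem tree_double_stepped_green_walks
    (H : Type) [Fintype H] [Nonempty H] (G : RibbonGraph H) (n : ℕ)
    (hE : G.numEdges = n) (hTree : G.IsTree) :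
    (∀ x y : H, G.step.SameCycle x y) ∧
      (∀ x : H, Function.minimalPeriod (⇑G.step) x = 2 * n) ∧
      Nat.card (Quotient (sameCycleSetoid (G.step ^ 2))) = 2 ∧
      (∀ x : H, Function.minimalPeriod (⇑(G.step ^ 2)) x = n) := by
  classical
  have htot : ∀ x y : H, G.step.SameCycle x y := G.step_sameCycle_total hTree
  have hcard : Fintype.card H = 2 * n := by
    rw [G.card_eq_two_mul_numEdges, hE]
  have hn : 1 ≤ n := by
    have : 0 < Fintype.card H := Fintype.card_pos
    omega
  have hmp : ∀ x : H, Function.minimalPeriod (⇑G.step) x = 2 * n := fun x => by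
    rw [tdg_minimalPeriod_eq_card G.step htot x, hcard]
  refine ⟨htot, hmp, ?_, ?_⟩
  · -- exactly two double-stepped walks
    obtain ⟨x₀⟩ := ‹Nonempty H›
    have hneq : ¬ (G.step ^ 2).SameCycle x₀ (G.step x₀) := by
      intro h
      obtain ⟨i, _, hi⟩ := h.exists_pow_eq'
      have hi' : (G.step ^ (2 * i)) x₀ = G.step x₀ := by
        rw [pow_mul]; exact hi
      rcases Nat.eq_zero_or_pos i with hi0 | hipos
      · subst hi0
        simp only [mul_zero, pow_zero, Equiv.Perm.one_apply] at hi'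
        have hfix : Function.IsPeriodicPt (⇑G.step) 1 x₀ := by
          show (⇑G.step)^[1] x₀ = x₀
          simp [← hi']
        have := hfix.minimalPeriod_le Nat.one_pos
        rw [hmp x₀] at this
        omega
      · have h2i : 2 * i = (2 * i - 1) + 1 := by omega
        have hstep : G.step ((G.step ^ (2 * i - 1)) x₀) = G.step x₀ := by
          rw [← Equiv.Perm.mul_apply, ← pow_succ', ← h2i]
          exact hi'
        have hfix : (G.step ^ (2 * i - 1)) x₀ = x₀ := G.step.injective hstep
        have hfix' : Function.IsPeriodicPt (⇑G.step) (2 * i - 1) x₀ := by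
          show (⇑G.step)^[2 * i - 1] x₀ = x₀
          rw [← Equiv.Perm.coe_pow]; exact hfix
        have hdvd := hfix'.minimalPeriod_dvd
        rw [hmp x₀] at hdvd
        have h2 : (2 : ℕ) ∣ 2 * i - 1 := dvd_trans ⟨n, rfl⟩ hdvd
        obtain ⟨k, hk⟩ := h2
        omega
    have hcover : ∀ y : H, (G.step ^ 2).SameCycle x₀ y ∨ (G.step ^ 2).SameCycle (G.step x₀) y := by
      intro y
      obtain ⟨i, _, hi⟩ := (htot x₀ y).exists_pow_eq'
      rcases Nat.even_or_odd i with ⟨k, hk⟩ | ⟨k, hk⟩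
      · left
        refine ⟨(k : ℤ), ?_⟩
        rw [zpow_natCast, ← pow_mul, show 2 * k = i by omega]
        exact hi
      · right
        refine ⟨(k : ℤ), ?_⟩
        rw [zpow_natCast, ← pow_mul]
        rw [← Equiv.Perm.mul_apply, ← pow_succ, show 2 * k + 1 = i by omega]
        exact hi
    rw [Nat.card_eq_two_iff]
    refine ⟨Quotient.mk _ x₀, Quotient.mk _ (G.step x₀), ?_, ?_⟩
    · intro h
      exact hneq (Quotient.exact h)
    · ext q
      simp only [Set.mem_insert_iff, Set.mem_singleton_iff, Set.mem_univ, iff_true]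
      obtain ⟨y, rfl⟩ := Quotient.exists_rep q
      rcases hcover y with h | h
      · exact Or.inl (Quotient.sound h).symm
      · exact Or.inr (Quotient.sound h).symm
  · -- each double-stepped walk has length n
    intro x
    have hcoe : ⇑(G.step ^ 2) = (⇑G.step)^[2] := Equiv.Perm.coe_pow _ _
    rw [hcoe, Function.minimalPeriod_iterate_eq_div_gcd (by norm_num), hmp x]
    rw [Nat.gcd_comm, Nat.gcd_eq_left ⟨n, rfl⟩]
    omega
end

section
/- A ribbon graph consisting solely of a single cycle of odd length l has exactly two distinct Green walks (one along each side of the cycle), each of length l, and hence exactly two distinct double-stepped Green walks, each of length l. -/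
/-- A ribbon graph consisting solely of a single cycle of odd length
`l` (a connected graph in which every vertex has valency exactly `2`, with `2 l`
half-edges in total) has exactly two distinct Green walks, each of length `l`, and
hence exactly two distinct double-stepped Green walks, each of length `l`. -/
theorem odd_cycle_green_walks
    (H : Type) [Fintype H] (G : RibbonGraph H) (l : ℕ) (hodd : Odd l)
    (hcard : Fintype.card H = 2 * l)
    (hval : ∀ x : H, G.rho (G.rho x) = x ∧ G.rho x ≠ x) :
    Nat.card (Quotient (sameCycleSetoid G.step)) = 2 ∧
      (∀ x : H, Function.minimalPeriod (⇑G.step) x = l) ∧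
      Nat.card (Quotient (sameCycleSetoid (G.step ^ 2))) = 2 ∧
      (∀ x : H, Function.minimalPeriod (⇑(G.step ^ 2)) x = l) := by

  classical
  set σ := G.sigma with hσdef
  set ρ := G.rho with hρdef
  set s := G.step with hsdef
  have hs_apply : ∀ x, s x = σ (ρ x) := fun x => rfl
  have hσ2 : ∀ x, σ (σ x) = x := G.invol
  have hρ2 : ∀ x, ρ (ρ x) = x := fun x => (hval x).1
  have hsinv : ∀ x, s⁻¹ x = ρ (σ x) := by
    intro x
    apply s.injective
    rw [show s (s⁻¹ x) = x from s.apply_symm_apply x, hs_apply, hρ2]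
    exact (hσ2 x).symm
  have hρs : ∀ x, ρ (s x) = s⁻¹ (ρ x) := by
    intro x; rw [hsinv, hs_apply]
  have hsc : SemiconjBy ρ s s⁻¹ := by
    ext x; simp only [Equiv.Perm.coe_mul, Function.comp_apply, hρs]
  have hconj : ∀ (k : ℤ) (x : H), ρ ((s ^ k) x) = (s ^ (-k)) (ρ x) := by
    intro k x
    have h := (hsc.zpow_right k).eq
    rw [inv_zpow, ← zpow_neg] at h
    calc ρ ((s ^ k) x) = (ρ * s ^ k) x := rfl
      _ = (s ^ (-k) * ρ) x := by rw [h]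
      _ = (s ^ (-k)) (ρ x) := rfl
  have hσ_s : ∀ x, σ x = s (ρ x) := fun x => by rw [hs_apply, hρ2]
  have hRρ : ∀ a b : H, s.SameCycle a b → s.SameCycle (ρ a) (ρ b) := by
    rintro a b ⟨k, hk⟩
    exact ⟨-k, by rw [← hconj, hk]⟩
  have hRρ' : ∀ a b : H, s.SameCycle a b ↔ s.SameCycle (ρ a) (ρ b) := by
    intro a b
    refine ⟨hRρ a b, fun h => ?_⟩
    have := hRρ _ _ h
    rwa [hρ2, hρ2] at this
  -- coverage of H by the two walks
  have hcov : ∀ x y : H, s.SameCycle x y ∨ s.SameCycle x (ρ y) := by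
    intro x y
    set R : H → H → Prop := fun a b => s.SameCycle a b ∨ s.SameCycle a (ρ b) with hR
    have hRequiv : Equivalence R := by
      constructor
      · intro a; exact Or.inl (Equiv.Perm.SameCycle.refl s a)
      · intro a b h
        rcases h with h | h
        · exact Or.inl h.symm
        · have := hRρ _ _ h.symm
          rw [hρ2] at this
          exact Or.inr this
      · intro a b c hab hbc
        rcases hab with hab | hab <;> rcases hbc with hbc | hbc
        · exact Or.inl (hab.trans hbc)
        · exact Or.inr (hab.trans hbc)
        · have := hRρ _ _ hbc
          exact Or.inr (hab.trans this)
        · have := hRρ _ _ hbc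
          rw [hρ2] at this
          exact Or.inl (hab.trans this)
    have key : ∀ a b : H, (σ a = b ∨ ρ a = b) → R a b := by
      rintro a b (rfl | rfl)
      · refine Or.inr ?_
        have : ρ (σ a) = s⁻¹ a := (hsinv a).symm
        rw [this]
        exact ⟨-1, by rw [zpow_neg_one]⟩
      · refine Or.inr ?_
        rw [hρ2]
    exact hRequiv.eqvGen_iff.mp (Relation.EqvGen.mono key _ _ (G.conn x y))
  -- the two walks are distinct
  have hnot : ∀ x : H, ¬ s.SameCycle x (ρ x) := by
    rintro x ⟨k, hk⟩
    rcases Int.even_or_odd k with ⟨t, ht⟩ | ⟨t, ht⟩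
    · apply (hval ((s ^ t) x)).2
      show ρ ((s ^ t) x) = (s ^ t) x
      rw [hconj t x, ← hk, ← Equiv.Perm.mul_apply, ← zpow_add]
      congr 2
      omega
    · apply G.noFix ((s ^ (t + 1)) x)
      show σ ((s ^ (t + 1)) x) = (s ^ (t + 1)) x
      rw [hσ_s, hconj (t+1) x, ← hk]
      calc s ((s ^ (-(t+1))) ((s ^ k) x)) = (s ^ (1 + (-(t+1) + k))) x := by
            rw [zpow_add, zpow_add, zpow_one]; rfl
        _ = (s ^ (t+1)) x := by rw [show 1 + (-(t+1) + k) = t+1 by omega]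
  -- orbits
  have hper : ∀ x : H, x ∈ Function.periodicPts ⇑s := by
    intro x
    refine ⟨orderOf s, orderOf_pos s, ?_⟩
    show (⇑s)^[orderOf s] x = x
    rw [← Equiv.Perm.coe_pow, pow_orderOf_eq_one]
    rfl
  set m : H → ℕ := fun x => Function.minimalPeriod (⇑s) x with hm
  have hmpos : ∀ x : H, 0 < m x := fun x =>
    Function.minimalPeriod_pos_of_mem_periodicPts (hper x)
  set orb : H → Finset H := fun x => (Finset.range (m x)).image (fun k => (s ^ k) x) with horb
  have horb_card : ∀ x : H, (orb x).card = m x := by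
    intro x
    rw [horb]
    rw [Finset.card_image_of_injOn, Finset.card_range]
    intro a ha b hb hab
    simp only [Finset.coe_range, Set.mem_Iio] at ha hb
    exact Function.iterate_injOn_Iio_minimalPeriod ha hb hab
  have horb_mem : ∀ x y : H, y ∈ orb x ↔ s.SameCycle x y := by
    intro x y
    simp only [horb, Finset.mem_image, Finset.mem_range]
    constructor
    · rintro ⟨k, _, rfl⟩
      exact ⟨(k : ℤ), by rw [zpow_natCast]⟩
    · intro h
      obtain ⟨i, _, hi⟩ := h.exists_pow_eq'
      refine ⟨i % m x, Nat.mod_lt _ (hmpos x), ?_⟩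
      calc (s ^ (i % m x)) x = (⇑s)^[i % m x] x := by rw [Equiv.Perm.coe_pow]
        _ = (⇑s)^[i] x := Function.iterate_mod_minimalPeriod_eq
        _ = (s ^ i) x := by rw [Equiv.Perm.coe_pow]
        _ = y := hi
  have horb_rho : ∀ x : H, orb (ρ x) = (orb x).image ⇑ρ := by
    intro x
    ext y
    simp only [Finset.mem_image]
    rw [horb_mem]
    constructor
    · intro h
      refine ⟨ρ y, ?_, hρ2 y⟩
      rw [horb_mem, hRρ' x (ρ y), hρ2]
      exact h
    · rintro ⟨z, hz, rfl⟩
      rw [horb_mem] at hz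
      exact hRρ _ _ hz
  have hdisj : ∀ x : H, Disjoint (orb x) (orb (ρ x)) := by
    intro x
    rw [Finset.disjoint_left]
    intro y hy hy'
    rw [horb_mem] at hy hy'
    exact hnot x (hy.trans hy'.symm)
  have huniv : ∀ x : H, orb x ∪ orb (ρ x) = Finset.univ := by
    intro x
    apply Finset.eq_univ_of_forall
    intro y
    rw [Finset.mem_union, horb_mem, horb_mem]
    rcases hcov x y with h | h
    · exact Or.inl h
    · refine Or.inr ?_
      have := hRρ _ _ h
      rwa [hρ2] at this
  have hml : ∀ x : H, m x = l := by
    intro x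
    have h1 : (orb x).card + (orb (ρ x)).card = 2 * l := by
      rw [← Finset.card_union_of_disjoint (hdisj x), huniv, Finset.card_univ, hcard]
    have h2 : m (ρ x) = m x := by
      rw [← horb_card, horb_rho, Finset.card_image_of_injective _ ρ.injective, horb_card]
    rw [horb_card, horb_card] at h1
    omega
  -- number of walks is two
  have hHne : Nonempty H := by
    rw [← Fintype.card_pos_iff, hcard]
    have := hodd.pos
    omega
  obtain ⟨x₀⟩ := hHne
  have hcount : ∀ (π : Equiv.Perm H), (∀ a b : H, π.SameCycle a b ↔ s.SameCycle a b) →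
      Nat.card (Quotient (sameCycleSetoid π)) = 2 := by
    intro π hπ
    rw [Nat.card_eq_two_iff]
    refine ⟨Quotient.mk (sameCycleSetoid π) x₀, Quotient.mk (sameCycleSetoid π) (ρ x₀), ?_, ?_⟩
    · intro h
      exact hnot x₀ ((hπ x₀ (ρ x₀)).mp (Quotient.exact h))
    · apply Set.eq_univ_of_forall
      intro q
      induction q using Quotient.ind with
      | _ y =>
        rcases hcov x₀ y with h | h
        · left
          exact Quotient.sound ((hπ y x₀).mpr h.symm)
        · right
          have h2 := hRρ _ _ h
          rw [hρ2] at h2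
          exact Quotient.sound ((hπ y (ρ x₀)).mpr h2.symm)
  have hsame2 : ∀ a b : H, (s ^ 2).SameCycle a b ↔ s.SameCycle a b := by
    intro a b
    constructor
    · rintro ⟨k, hk⟩
      refine ⟨2 * k, ?_⟩
      rw [← hk, ← zpow_natCast s 2, ← zpow_mul]
      norm_num
    · intro h
      obtain ⟨i, _, hi⟩ := h.exists_pow_eq'
      obtain ⟨c, hc⟩ : ∃ c, l + 1 = 2 * c := by
        obtain ⟨r, hr⟩ := hodd
        exact ⟨r + 1, by omega⟩
      refine ⟨(i * c : ℕ), ?_⟩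
      have hbl : (⇑s)^[l * i] b = b := by
        have : Function.IsPeriodicPt ⇑s (l * i) b := by
          have h0 := Function.isPeriodicPt_minimalPeriod ⇑s b
          rw [show Function.minimalPeriod ⇑s b = l from hml b] at h0
          exact h0.mul_const i
        exact this
      have key : (s ^ (i * (l + 1))) a = b := by
        have : i * (l + 1) = l * i + i := by ring
        rw [this, pow_add, Equiv.Perm.mul_apply, hi]
        exact hbl
      rw [zpow_natCast, ← pow_mul]
      rw [show 2 * (i * c) = i * (l + 1) from by rw [hc]; ring]
      exact key
  have hsetoid_eq : sameCycleSetoid (s ^ 2) = sameCycleSetoid s := Setoid.ext hsame2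
  refine ⟨hcount s (fun a b => Iff.rfl), hml, ?_, ?_⟩
  · exact hcount (s ^ 2) hsame2
  · intro x
    have h2 : ⇑(s ^ 2) = (⇑s)^[2] := Equiv.Perm.coe_pow s 2
    rw [h2, Function.minimalPeriod_iterate_eq_div_gcd (by norm_num : (2:ℕ) ≠ 0)]
    rw [show Function.minimalPeriod ⇑s x = l from hml x]
    rw [Nat.Coprime.gcd_eq_one hodd.coprime_two_right]
    exact Nat.div_one l
end

section
/- A ribbon graph consisting solely of a single cycle of even length l has exactly two distinct Green walks, each of even length l, and these split into exactly four distinct double-stepped Green walks, each of length l/2. -/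
section Aux

open Function

variable {H : Type} {G : RibbonGraph H}

lemma rg_key_sigma (hρ : ∀ x, G.rho (G.rho x) = x) :
    ∀ (j : ℕ) (y : H), (⇑G.step)^[j] (G.sigma ((⇑G.step)^[j] y)) = G.sigma y := by
  have base : ∀ z, G.step (G.sigma (G.step z)) = G.sigma z := by
    intro z
    show G.sigma (G.rho (G.sigma (G.sigma (G.rho z)))) = G.sigma z
    rw [G.invol, hρ]
  intro j
  induction j with
  | zero => intro y; simp
  | succ j ih =>
    intro y
    rw [Function.iterate_succ_apply]
    rw [Function.iterate_succ_apply']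
    rw [base]
    exact ih y

lemma rg_key_rho (hρ : ∀ x, G.rho (G.rho x) = x) :
    ∀ (j : ℕ) (y : H), (⇑G.step)^[j] (G.rho ((⇑G.step)^[j] y)) = G.rho y := by
  have base : ∀ z, G.step (G.rho (G.step z)) = G.rho z := by
    intro z
    show G.sigma (G.rho (G.rho (G.sigma (G.rho z)))) = G.rho z
    rw [hρ, G.invol]
  intro j
  induction j with
  | zero => intro y; simp
  | succ j ih =>
    intro y
    rw [Function.iterate_succ_apply]
    rw [Function.iterate_succ_apply']
    rw [base]
    exact ih y

lemma rg_mem_periodicPts [Fintype H] (f : Equiv.Perm H) (x : H) :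
    x ∈ Function.periodicPts ⇑f :=
  ⟨orderOf f, orderOf_pos f, by
    show (⇑f)^[orderOf f] x = x
    rw [← Equiv.Perm.coe_pow, pow_orderOf_eq_one]; rfl⟩

lemma rg_not_sameCycle [Fintype H] (hval : ∀ x : H, G.rho (G.rho x) = x ∧ G.rho x ≠ x)
    (x₀ : H) : ¬ G.step.SameCycle x₀ (G.sigma x₀) := by
  have hρ : ∀ x, G.rho (G.rho x) = x := fun x => (hval x).1
  intro h
  obtain ⟨k, -, hk⟩ := h.exists_pow_eq'
  have hk' : (⇑G.step)^[k] x₀ = G.sigma x₀ := by rw [← Equiv.Perm.coe_pow]; exact hk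
  have hinj : ∀ j : ℕ, Function.Injective ((⇑G.step)^[j]) :=
    fun j => (G.step.injective).iterate j
  rcases Nat.even_or_odd k with ⟨j, hj⟩ | ⟨j, hj⟩
  · -- k = j + j : σ has a fixed point
    have : (⇑G.step)^[j] (G.sigma ((⇑G.step)^[j] x₀)) = (⇑G.step)^[j] ((⇑G.step)^[j] x₀) := by
      rw [rg_key_sigma hρ, ← Function.iterate_add_apply, ← hj]
      exact hk'.symm
    exact G.noFix _ (hinj j this)
  · -- k = 2j+1 : ρ has a fixed point
    have h1 : G.step ((⇑G.step)^[2*j] x₀) = G.sigma x₀ := by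
      rw [show G.step ((⇑G.step)^[2*j] x₀) = (⇑G.step)^[2*j+1] x₀ from
        (Function.iterate_succ_apply' _ _ _).symm, ← hj]
      exact hk'
    have h2 : G.rho x₀ = (⇑G.step)^[2*j] x₀ := by
      have h1' : G.sigma (G.rho ((⇑G.step)^[2*j] x₀)) = G.sigma x₀ := h1
      have := congrArg G.rho (G.sigma.injective h1')
      rw [hρ] at this
      exact this.symm
    have h3 : (⇑G.step)^[j] (G.rho ((⇑G.step)^[j] x₀)) = (⇑G.step)^[j] ((⇑G.step)^[j] x₀) := by
      rw [rg_key_rho hρ, ← Function.iterate_add_apply,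
        show j + j = 2*j by ring]
      exact h2
    exact (hval _).2 (hinj j h3)

lemma rg_twist (hρ : ∀ x, G.rho (G.rho x) = x) {a b : H}
    (h : G.step.SameCycle a b) : G.step.SameCycle (G.sigma a) (G.sigma b) := by
  have hσinv : G.sigma⁻¹ = G.sigma := by
    apply Equiv.ext
    intro x
    apply G.sigma.injective
    rw [show G.sigma (G.sigma⁻¹ x) = x from G.sigma.apply_symm_apply x, G.invol]
  have hmul : G.step * (G.sigma * G.step * G.sigma) = 1 := by
    apply Equiv.ext
    intro x
    show G.sigma (G.rho (G.sigma (G.sigma (G.rho (G.sigma x))))) = x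
    rw [G.invol, hρ, G.invol]
  have hconj : G.sigma * G.step * G.sigma⁻¹ = G.step⁻¹ := by
    rw [hσinv]
    exact (inv_eq_of_mul_eq_one_right hmul).symm
  obtain ⟨i, hi⟩ := h
  refine ⟨-i, ?_⟩
  have hpow : G.step ^ (-i) = G.sigma * G.step ^ i * G.sigma⁻¹ := by
    rw [zpow_neg, ← inv_zpow, ← hconj, conj_zpow]
  rw [hpow, hσinv]
  show G.sigma ((G.step ^ i) (G.sigma (G.sigma a))) = G.sigma b
  rw [G.invol, hi]

lemma rg_cover (hval : ∀ x : H, G.rho (G.rho x) = x ∧ G.rho x ≠ x) (x₀ y : H) :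
    G.step.SameCycle x₀ y ∨ G.step.SameCycle (G.sigma x₀) y := by
  have hρ : ∀ x, G.rho (G.rho x) = x := fun x => (hval x).1
  have T : ∀ {a b : H}, G.step.SameCycle a b → G.step.SameCycle (G.sigma a) (G.sigma b) :=
    fun h => rg_twist hρ h
  have main : ∀ a b : H, Relation.EqvGen (fun p q => G.sigma p = q ∨ G.rho p = q) a b →
      (G.step.SameCycle a b ∨ G.step.SameCycle (G.sigma a) b) := by
    intro a b h
    induction h with
    | rel a b hab =>
      rcases hab with h | h
      · right; rw [← h]
      · have h1 : G.step.SameCycle a (G.sigma b) := ⟨1, by rw [zpow_one, ← h]; rfl⟩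
        have h2 := T h1
        rw [G.invol] at h2
        right; exact h2
    | refl a => exact Or.inl (Equiv.Perm.SameCycle.refl _ _)
    | symm a b h ih =>
      rcases ih with h1 | h1
      · left; exact h1.symm
      · have h2 := T h1.symm
        rw [G.invol] at h2
        right; exact h2
    | trans a b c h1' h2' ih1 ih2 =>
      rcases ih1 with h1 | h1 <;> rcases ih2 with h2 | h2
      · left; exact h1.trans h2
      · have h3 := T h1
        right; exact h3.trans h2
      · right; exact h1.trans h2
      · have h3 := T h1
        rw [G.invol] at h3
        left; exact h3.trans h2
  exact main x₀ y (G.conn x₀ y)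

lemma rg_minper_sigma [Fintype H] (hρ : ∀ x, G.rho (G.rho x) = x) (x : H) :
    Function.minimalPeriod ⇑G.step (G.sigma x) = Function.minimalPeriod ⇑G.step x := by
  have htrans : ∀ (y : H) (n : ℕ), Function.IsPeriodicPt ⇑G.step n y →
      Function.IsPeriodicPt ⇑G.step n (G.sigma y) := by
    intro y n h
    have hkey := rg_key_sigma hρ n y
    have h' : (⇑G.step)^[n] y = y := h
    rw [h'] at hkey
    exact hkey
  have pos : ∀ y : H, 0 < Function.minimalPeriod ⇑G.step y := fun y =>
    Function.minimalPeriod_pos_of_mem_periodicPts (rg_mem_periodicPts _ _)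
  apply le_antisymm
  · exact (htrans x _ (Function.isPeriodicPt_minimalPeriod _ _)).minimalPeriod_le (pos x)
  · have := htrans (G.sigma x) _ (Function.isPeriodicPt_minimalPeriod ⇑G.step (G.sigma x))
    rw [G.invol] at this
    exact this.minimalPeriod_le (pos (G.sigma x))

end Aux

section Aux2

open Function

variable {H : Type} {G : RibbonGraph H}

lemma rg_card_eq [Fintype H] (hval : ∀ x : H, G.rho (G.rho x) = x ∧ G.rho x ≠ x) (x₀ : H) :
    Fintype.card H =
      Function.minimalPeriod ⇑G.step x₀ + Function.minimalPeriod ⇑G.step x₀ := by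
  classical
  set n := Function.minimalPeriod ⇑G.step x₀ with hn
  have hρ : ∀ x, G.rho (G.rho x) = x := fun x => (hval x).1
  have npos : 0 < n :=
    Function.minimalPeriod_pos_of_mem_periodicPts (rg_mem_periodicPts _ _)
  have hσn : Function.minimalPeriod ⇑G.step (G.sigma x₀) = n := rg_minper_sigma hρ x₀
  have hnot := rg_not_sameCycle hval x₀
  have hSC1 : ∀ i : ℕ, G.step.SameCycle x₀ ((⇑G.step)^[i] x₀) := fun i =>
    ⟨(i : ℤ), by rw [zpow_natCast]; rfl⟩
  have hSC2 : ∀ i : ℕ, G.step.SameCycle (G.sigma x₀) ((⇑G.step)^[i] (G.sigma x₀)) := fun i =>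
    ⟨(i : ℤ), by rw [zpow_natCast]; rfl⟩
  let F : Fin n ⊕ Fin n → H :=
    Sum.elim (fun i => (⇑G.step)^[(i : ℕ)] x₀) (fun i => (⇑G.step)^[(i : ℕ)] (G.sigma x₀))
  have hinjF : Function.Injective F := by
    rintro (⟨i, hi⟩ | ⟨i, hi⟩) (⟨j, hj⟩ | ⟨j, hj⟩) hEq
    · simp only [F, Sum.elim_inl] at hEq
      have : i = j := Function.iterate_injOn_Iio_minimalPeriod
        (show i ∈ Set.Iio (Function.minimalPeriod ⇑G.step x₀) from hi)
        (show j ∈ Set.Iio (Function.minimalPeriod ⇑G.step x₀) from hj) hEq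
      exact congrArg Sum.inl (Fin.ext this)
    · exfalso
      simp only [F, Sum.elim_inl, Sum.elim_inr] at hEq
      exact hnot ((hSC1 i).trans (hEq ▸ (hSC2 j).symm))
    · exfalso
      simp only [F, Sum.elim_inl, Sum.elim_inr] at hEq
      exact hnot ((hSC1 j).trans (hEq ▸ (hSC2 i).symm))
    · simp only [F, Sum.elim_inr] at hEq
      have : i = j := Function.iterate_injOn_Iio_minimalPeriod
        (show i ∈ Set.Iio (Function.minimalPeriod ⇑G.step (G.sigma x₀)) by rw [hσn]; exact hi)
        (show j ∈ Set.Iio (Function.minimalPeriod ⇑G.step (G.sigma x₀)) by rw [hσn]; exact hj)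
        hEq
      exact congrArg Sum.inr (Fin.ext this)
  have hsurF : Function.Surjective F := by
    intro y
    rcases rg_cover hval x₀ y with h | h
    · obtain ⟨i, -, hi⟩ := h.exists_pow_eq'
      refine ⟨Sum.inl ⟨i % n, Nat.mod_lt _ npos⟩, ?_⟩
      show (⇑G.step)^[i % n] x₀ = y
      rw [hn, Function.iterate_mod_minimalPeriod_eq, ← Equiv.Perm.coe_pow]
      exact hi
    · obtain ⟨i, -, hi⟩ := h.exists_pow_eq'
      refine ⟨Sum.inr ⟨i % n, Nat.mod_lt _ npos⟩, ?_⟩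
      show (⇑G.step)^[i % n] (G.sigma x₀) = y
      rw [← hσn, Function.iterate_mod_minimalPeriod_eq, ← Equiv.Perm.coe_pow]
      exact hi
  have hcard := Fintype.card_of_bijective ⟨hinjF, hsurF⟩
  simpa using hcard.symm

end Aux2

/-- A ribbon graph consisting solely of a single cycle of even length
`l` (a connected graph in which every vertex has valency exactly `2`, with `2 l`
half-edges in total) has exactly two distinct Green walks, each of (even) length `l`,
and these split into exactly four distinct double-stepped Green walks, each of
length `l / 2`. -/
theorem even_cycle_green_walks
    (H : Type) [Fintype H] (G : RibbonGraph H) (l : ℕ) (heven : Even l) (hl : 0 < l)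
    (hcard : Fintype.card H = 2 * l)
    (hval : ∀ x : H, G.rho (G.rho x) = x ∧ G.rho x ≠ x) :
    Nat.card (Quotient (sameCycleSetoid G.step)) = 2 ∧
      (∀ x : H, Function.minimalPeriod (⇑G.step) x = l) ∧
      Nat.card (Quotient (sameCycleSetoid (G.step ^ 2))) = 4 ∧
      (∀ x : H, Function.minimalPeriod (⇑(G.step ^ 2)) x = l / 2) := by
  classical
  have hρ : ∀ x, G.rho (G.rho x) = x := fun x => (hval x).1
  have h2dvd : 2 ∣ l := heven.two_dvd
  have hl2 : 2 ≤ l := by obtain ⟨r, hr⟩ := heven; omega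
  obtain ⟨x₀⟩ : Nonempty H := Fintype.card_pos_iff.mp (by omega)
  have hpm := rg_mem_periodicPts (H := H)
  -- every minimal period of `step` equals `l`
  have hcardn := rg_card_eq hval x₀
  have hnl : Function.minimalPeriod ⇑G.step x₀ = l := by omega
  have hmp : ∀ x : H, Function.minimalPeriod ⇑G.step x = l := by
    intro x
    rcases rg_cover hval x₀ x with h | h <;> obtain ⟨i, -, hi⟩ := h.exists_pow_eq'
    · rw [← hi]
      show Function.minimalPeriod ⇑G.step ((⇑G.step)^[i] x₀) = l
      rw [Function.minimalPeriod_apply_iterate (hpm _ _) i]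
      exact hnl
    · rw [← hi]
      show Function.minimalPeriod ⇑G.step ((⇑G.step)^[i] (G.sigma x₀)) = l
      rw [Function.minimalPeriod_apply_iterate (hpm _ _) i, rg_minper_sigma hρ x₀]
      exact hnl
  have hmp2 : ∀ x : H, Function.minimalPeriod ⇑(G.step ^ 2) x = l / 2 := by
    intro x
    have hc : ⇑(G.step ^ 2) = (⇑G.step)^[2] := by rw [Equiv.Perm.coe_pow]
    rw [hc, Function.minimalPeriod_iterate_eq_div_gcd (by norm_num), hmp x]
    congr 1
    rw [Nat.gcd_comm]
    exact Nat.gcd_eq_left h2dvd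
  have hnot : ∀ x : H, ¬ G.step.SameCycle x (G.sigma x) := fun x => rg_not_sameCycle hval x
  have selfSC : ∀ x : H, G.step.SameCycle x (G.step x) := fun x => ⟨1, by rw [zpow_one]⟩
  have hmod : ∀ (x : H) (a b : ℕ), (⇑G.step)^[a] x = (⇑G.step)^[b] x → a % l = b % l := by
    intro x a b h
    have h1 : (⇑G.step)^[a % l] x = (⇑G.step)^[b % l] x := by
      rw [show l = Function.minimalPeriod ⇑G.step x from (hmp x).symm,
        Function.iterate_mod_minimalPeriod_eq, Function.iterate_mod_minimalPeriod_eq]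
      exact h
    have ha : a % l ∈ Set.Iio (Function.minimalPeriod ⇑G.step x) := by
      rw [hmp x]; exact Nat.mod_lt _ hl
    have hb : b % l ∈ Set.Iio (Function.minimalPeriod ⇑G.step x) := by
      rw [hmp x]; exact Nat.mod_lt _ hl
    exact Function.iterate_injOn_Iio_minimalPeriod ha hb h1
  have hSC2toSC : ∀ {a b : H}, (G.step ^ 2).SameCycle a b → G.step.SameCycle a b := by
    rintro a b ⟨i, hi⟩
    refine ⟨2 * i, ?_⟩
    have e : G.step ^ ((2 : ℤ) * i) = (G.step ^ 2) ^ i := by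
      rw [← zpow_natCast G.step 2, ← zpow_mul]
      norm_num
    rw [e, hi]
  have hnot2self : ∀ x : H, ¬ (G.step ^ 2).SameCycle x (G.step x) := by
    intro x h
    obtain ⟨i, -, hi⟩ := h.exists_pow_eq'
    have hi' : (⇑G.step)^[2 * i] x = (⇑G.step)^[1] x := by
      have e : G.step ^ (2 * i) = (G.step ^ 2) ^ i := pow_mul _ 2 i
      calc (⇑G.step)^[2 * i] x = (G.step ^ (2 * i)) x := rfl
        _ = ((G.step ^ 2) ^ i) x := by rw [e]
        _ = G.step x := hi
        _ = (⇑G.step)^[1] x := rfl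
    have hm := hmod x (2 * i) 1 hi'
    rw [Nat.mod_eq_of_lt (by omega : 1 < l)] at hm
    have h2 : 2 ∣ (2 * i) % l := (Nat.dvd_mod_iff h2dvd).mpr ⟨i, rfl⟩
    omega
  have split : ∀ (x y : H), G.step.SameCycle x y →
      (G.step ^ 2).SameCycle x y ∨ (G.step ^ 2).SameCycle (G.step x) y := by
    intro x y h
    obtain ⟨i, -, hi⟩ := h.exists_pow_eq'
    rcases Nat.even_or_odd i with ⟨j, hj⟩ | ⟨j, hj⟩
    · left
      refine ⟨(j : ℤ), ?_⟩
      rw [zpow_natCast, ← pow_mul, show 2 * j = i by omega]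
      exact hi
    · right
      refine ⟨(j : ℤ), ?_⟩
      rw [zpow_natCast, ← pow_mul]
      show (G.step ^ (2 * j)) (G.step x) = y
      rw [← Equiv.Perm.mul_apply, ← pow_succ, show 2 * j + 1 = i by omega]
      exact hi
  refine ⟨?_, hmp, ?_, hmp2⟩
  · -- exactly two Green walks
    set S1 := sameCycleSetoid G.step with hS1
    have hA1B1 : Quotient.mk S1 x₀ ≠ Quotient.mk S1 (G.sigma x₀) := fun h =>
      hnot x₀ (Quotient.exact h)
    have huniv1 : (Set.univ : Set (Quotient S1)) =
        {Quotient.mk S1 x₀, Quotient.mk S1 (G.sigma x₀)} := by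
      ext q
      simp only [Set.mem_univ, true_iff, Set.mem_insert_iff, Set.mem_singleton_iff]
      induction q using Quotient.ind with
      | _ y =>
        rcases rg_cover hval x₀ y with h | h
        · left; exact (Quotient.sound h).symm
        · right; exact (Quotient.sound h).symm
    rw [← Set.ncard_univ, huniv1, Set.ncard_pair hA1B1]
  · -- exactly four double-stepped Green walks
    set S2 := sameCycleSetoid (G.step ^ 2) with hS2
    have hAB : Quotient.mk S2 x₀ ≠ Quotient.mk S2 (G.step x₀) := fun h =>
      hnot2self x₀ (Quotient.exact h)
    have hCD : Quotient.mk S2 (G.sigma x₀) ≠ Quotient.mk S2 (G.step (G.sigma x₀)) := fun h =>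
      hnot2self (G.sigma x₀) (Quotient.exact h)
    have hAC : Quotient.mk S2 x₀ ≠ Quotient.mk S2 (G.sigma x₀) := fun h =>
      hnot x₀ (hSC2toSC (Quotient.exact h))
    have hAD : Quotient.mk S2 x₀ ≠ Quotient.mk S2 (G.step (G.sigma x₀)) := fun h =>
      hnot x₀ ((hSC2toSC (Quotient.exact h)).trans (selfSC (G.sigma x₀)).symm)
    have hBC : Quotient.mk S2 (G.step x₀) ≠ Quotient.mk S2 (G.sigma x₀) := fun h =>
      hnot x₀ ((selfSC x₀).trans (hSC2toSC (Quotient.exact h)))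
    have hBD : Quotient.mk S2 (G.step x₀) ≠ Quotient.mk S2 (G.step (G.sigma x₀)) := fun h =>
      hnot x₀ (((selfSC x₀).trans (hSC2toSC (Quotient.exact h))).trans
        (selfSC (G.sigma x₀)).symm)
    have huniv2 : (Set.univ : Set (Quotient S2)) =
        {Quotient.mk S2 x₀, Quotient.mk S2 (G.step x₀),
          Quotient.mk S2 (G.sigma x₀), Quotient.mk S2 (G.step (G.sigma x₀))} := by
      ext q
      simp only [Set.mem_univ, true_iff, Set.mem_insert_iff, Set.mem_singleton_iff]
      induction q using Quotient.ind with
      | _ y =>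
        rcases rg_cover hval x₀ y with h | h
        · rcases split x₀ y h with h2 | h2
          · exact Or.inl (Quotient.sound h2).symm
          · exact Or.inr (Or.inl (Quotient.sound h2).symm)
        · rcases split (G.sigma x₀) y h with h2 | h2
          · exact Or.inr (Or.inr (Or.inl (Quotient.sound h2).symm))
          · exact Or.inr (Or.inr (Or.inr (Quotient.sound h2).symm))
    rw [← Set.ncard_univ, huniv2,
      Set.ncard_insert_of_notMem (by simp [hAB, hAC, hAD]) (Set.toFinite _),
      Set.ncard_insert_of_notMem (by simp [hBC, hBD]) (Set.toFinite _),
      Set.ncard_pair hCD]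
end

section
/- Let G be a ribbon graph with a unique cycle of length l (l odd), with n1 additional tree edges attached on the inside of the cycle and n2 on the outside. Then G has exactly two distinct double-stepped Green walks, of lengths l + 2*n1 and l + 2*n2 respectively. -/
namespace RibbonGraph

variable {H : Type} (G : RibbonGraph H)

lemma sigma_sigma (x : H) : G.sigma (G.sigma x) = x := G.invol x

lemma sigma_eq_iff {a b : H} : G.sigma a = b ↔ a = G.sigma b :=
  ⟨fun h => by rw [← h, G.invol], fun h => by rw [h, G.invol]⟩

lemma step_apply (x : H) : G.step x = G.sigma (G.rho x) := rfl

/-- σ-closed sets of half-edges. -/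
def SClosed (A : Set H) : Prop := ∀ a, a ∈ A → G.sigma a ∈ A

/-- The walk relation using only σ-steps inside `A`. -/
def Rel (A : Set H) (a b : H) : Prop :=
  G.rho a = b ∨ G.rho b = a ∨ (G.sigma a = b ∧ a ∈ A)

/-- Connectivity using only σ-steps inside `A`. -/
def Conn (A : Set H) (a b : H) : Prop := Relation.ReflTransGen (G.Rel A) a b

lemma rel_symm {A : Set H} (hA : G.SClosed A) : Symmetric (G.Rel A) := by
  rintro a b (h | h | ⟨h, ha⟩)
  · exact Or.inr (Or.inl h)
  · exact Or.inl h
  · exact Or.inr (Or.inr ⟨by rw [← h, G.invol], h ▸ hA a ha⟩)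

lemma conn_symm {A : Set H} (hA : G.SClosed A) {a b : H} (h : G.Conn A a b) :
    G.Conn A b a := (@Relation.ReflTransGen.symmetric _ _ ⟨fun _ _ h => G.rel_symm hA h⟩).symm _ _ h

lemma conn_trans {A : Set H} {a b c : H} (h : G.Conn A a b) (h' : G.Conn A b c) :
    G.Conn A a c := h.trans h'

lemma conn_mono {A B : Set H} (hAB : A ⊆ B) {a b : H} (h : G.Conn A a b) :
    G.Conn B a b := by
  refine Relation.ReflTransGen.mono ?_ _ _ h
  rintro a b (h | h | ⟨h, ha⟩)
  exacts [Or.inl h, Or.inr (Or.inl h), Or.inr (Or.inr ⟨h, hAB ha⟩)]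

lemma conn_rho (A : Set H) (a : H) : G.Conn A a (G.rho a) :=
  Relation.ReflTransGen.single (Or.inl rfl)

lemma conn_rho' (A : Set H) (a : H) : G.Conn A a (G.rho.symm a) :=
  Relation.ReflTransGen.single (Or.inr (Or.inl (G.rho.apply_symm_apply a)))

lemma conn_sigma {A : Set H} {a : H} (ha : a ∈ A) : G.Conn A a (G.sigma a) :=
  Relation.ReflTransGen.single (Or.inr (Or.inr ⟨rfl, ha⟩))

lemma sclosed_univ : G.SClosed Set.univ := fun _ _ => Set.mem_univ _

lemma sclosed_sdiff_edge {A : Set H} (hA : G.SClosed A) (p : H) :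
    G.SClosed (A \ {p, G.sigma p}) := by
  rintro a ⟨ha, hb⟩
  simp only [Set.mem_insert_iff, Set.mem_singleton_iff] at hb
  push_neg at hb
  refine ⟨hA a ha, ?_⟩
  simp only [Set.mem_insert_iff, Set.mem_singleton_iff]
  push_neg
  refine ⟨?_, ?_⟩
  · intro h; exact hb.2 (by rw [← h, G.invol])
  · intro h; exact hb.1 (by rw [G.sigma_eq_iff, G.invol] at h; exact h)

lemma conn_univ (a b : H) : G.Conn Set.univ a b := by
  have h := G.conn a b
  induction h with
  | rel x y hxy =>
      rcases hxy with h | h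
      · exact G.conn_sigma (Set.mem_univ x) |>.trans (by rw [h])
      · exact (G.conn_rho _ x).trans (by rw [h])
  | refl x => exact Relation.ReflTransGen.refl
  | symm x y _ ih => exact G.conn_symm (G.sclosed_univ) ih
  | trans x y z _ _ ih₁ ih₂ => exact ih₁.trans ih₂



def connSetoid (A : Set H) (hA : G.SClosed A) : Setoid H :=
  ⟨G.Conn A, ⟨fun _ => Relation.ReflTransGen.refl, fun h => G.conn_symm hA h,
    fun h h' => h.trans h'⟩⟩

lemma conn_empty_iff {a b : H} : G.Conn ∅ a b ↔ G.rho.SameCycle a b := by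
  constructor
  · intro h
    induction h with
    | refl => exact Equiv.Perm.SameCycle.refl _ _
    | tail _ hcd ih =>
        rcases hcd with h | h | ⟨_, hmem⟩
        · exact ih.trans ⟨1, by simpa using h⟩
        · exact ih.trans ⟨-1, by simp [← h]⟩
        · exact absurd hmem (Set.notMem_empty _)
  · rintro ⟨i, hi⟩
    have key : ∀ (n : ℕ) (x : H), G.Conn ∅ x ((G.rho ^ n) x) := by
      intro n
      induction n with
      | zero => intro x; simpa [Conn] using (Relation.ReflTransGen.refl : G.Conn ∅ x x)
      | succ n ih =>
          intro x
          have := (ih x).tail (Or.inl rfl : G.Rel ∅ ((G.rho ^ n) x) (G.rho ((G.rho ^ n) x)))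
          simpa [Conn, ← Equiv.Perm.mul_apply, ← pow_succ'] using this
    rcases le_or_gt 0 i with hpos | hneg
    · obtain ⟨n, rfl⟩ := Int.eq_ofNat_of_zero_le hpos
      rw [zpow_natCast] at hi
      simpa [hi] using key n a
    · have h2 : (G.rho ^ (-i).toNat) b = a := by
        have : ((G.rho ^ (-i).toNat : Equiv.Perm H) : Equiv.Perm H) = G.rho ^ (-i) := by
          rw [← zpow_natCast, Int.toNat_of_nonneg (by omega)]
        rw [this, ← hi, ← Equiv.Perm.mul_apply, ← zpow_add]
        simp
      have := key (-i).toNat b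
      rw [h2] at this
      exact G.conn_symm (fun a h => absurd h (Set.notMem_empty _)) this

lemma card_quot_empty :
    Nat.card (Quotient (G.connSetoid ∅ (fun a h => absurd h (Set.notMem_empty _)))) =
      G.numVertices := by
  refine (Nat.card_congr (Quotient.congrRight fun a b => ?_)).symm
  exact (G.conn_empty_iff).symm

lemma conn_decomp {A : Set H} (hA : G.SClosed A) (p : H) {u v : H} (h : G.Conn A u v) :
    G.Conn (A \ {p, G.sigma p}) u v ∨
      (G.Conn (A \ {p, G.sigma p}) u p ∧ G.Conn (A \ {p, G.sigma p}) (G.sigma p) v) ∨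
      (G.Conn (A \ {p, G.sigma p}) u (G.sigma p) ∧ G.Conn (A \ {p, G.sigma p}) p v) := by
  set A' := A \ {p, G.sigma p} with hA'
  have hA'c : G.SClosed A' := G.sclosed_sdiff_edge hA p
  induction h with
  | refl => exact Or.inl Relation.ReflTransGen.refl
  | @tail c d huc hcd ih =>
      have step : ∀ {c' d'}, G.Rel A c' d' → c' ≠ p → c' ≠ G.sigma p → G.Rel A' c' d' := by
        rintro c' d' (h | h | ⟨h, hm⟩) h1 h2
        exacts [Or.inl h, Or.inr (Or.inl h),
          Or.inr (Or.inr ⟨h, ⟨hm, by simp [h1, h2]⟩⟩)]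
      by_cases hc1 : c = p
      · subst hc1
        rcases hcd with h | h | ⟨h, _⟩
        -- ρ c = d or ρ d = c are A'-steps
        · rcases ih with h' | ⟨h1, h2⟩ | ⟨h1, h2⟩
          · exact Or.inl (h'.tail (Or.inl h))
          · exact Or.inr (Or.inl ⟨h1, h2.tail (Or.inl h)⟩)
          · exact Or.inr (Or.inr ⟨h1, h2.tail (Or.inl h)⟩)
        · rcases ih with h' | ⟨h1, h2⟩ | ⟨h1, h2⟩
          · exact Or.inl (h'.tail (Or.inr (Or.inl h)))
          · exact Or.inr (Or.inl ⟨h1, h2.tail (Or.inr (Or.inl h))⟩)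
          · exact Or.inr (Or.inr ⟨h1, h2.tail (Or.inr (Or.inl h))⟩)
        · subst h
          rcases ih with h' | ⟨h1, h2⟩ | ⟨h1, h2⟩
          · exact Or.inr (Or.inl ⟨h', Relation.ReflTransGen.refl⟩)
          · exact Or.inl (h1.trans (G.conn_symm hA'c h2))
          · exact Or.inl h1
      by_cases hc2 : c = G.sigma p
      · subst hc2
        rcases hcd with h | h | ⟨h, _⟩
        · rcases ih with h' | ⟨h1, h2⟩ | ⟨h1, h2⟩
          · exact Or.inl (h'.tail (Or.inl h))
          · exact Or.inr (Or.inl ⟨h1, h2.tail (Or.inl h)⟩)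
          · exact Or.inr (Or.inr ⟨h1, h2.tail (Or.inl h)⟩)
        · rcases ih with h' | ⟨h1, h2⟩ | ⟨h1, h2⟩
          · exact Or.inl (h'.tail (Or.inr (Or.inl h)))
          · exact Or.inr (Or.inl ⟨h1, h2.tail (Or.inr (Or.inl h))⟩)
          · exact Or.inr (Or.inr ⟨h1, h2.tail (Or.inr (Or.inl h))⟩)
        · rw [G.invol] at h; subst h
          rcases ih with h' | ⟨h1, h2⟩ | ⟨h1, h2⟩
          · exact Or.inr (Or.inr ⟨h', Relation.ReflTransGen.refl⟩)
          · exact Or.inl h1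
          · exact Or.inl (h1.trans (G.conn_symm hA'c h2))
      · have hst := step hcd hc1 hc2
        rcases ih with h' | ⟨h1, h2⟩ | ⟨h1, h2⟩
        · exact Or.inl (h'.tail hst)
        · exact Or.inr (Or.inl ⟨h1, h2.tail hst⟩)
        · exact Or.inr (Or.inr ⟨h1, h2.tail hst⟩)

lemma card_quot_le [Fintype H] {A : Set H} (hA : G.SClosed A) (p : H) :
    Nat.card (Quotient (G.connSetoid (A \ {p, G.sigma p}) (G.sclosed_sdiff_edge hA p))) ≤
      Nat.card (Quotient (G.connSetoid A hA)) + 1 := by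
  classical
  set s' := G.connSetoid (A \ {p, G.sigma p}) (G.sclosed_sdiff_edge hA p) with hs'
  set s := G.connSetoid A hA with hs
  have hA'c : G.SClosed (A \ {p, G.sigma p}) := G.sclosed_sdiff_edge hA p
  have φwd : ∀ a b : H, s'.r a b → s.r a b := fun a b h =>
    G.conn_mono Set.diff_subset h
  let φ : Quotient s' → Quotient s := Quotient.map' id φwd
  let f : Quotient s' → Option (Quotient s) :=
    fun q => if q = Quotient.mk s' (G.sigma p) then none else some (φ q)
  have hφ : ∀ a : H, φ (Quotient.mk s' a) = Quotient.mk s a := fun a => rfl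
  have hinj : Function.Injective f := by
    intro q1 q2 hq
    obtain ⟨a, rfl⟩ := Quotient.exists_rep q1
    obtain ⟨b, rfl⟩ := Quotient.exists_rep q2
    by_cases h1 : Quotient.mk s' a = Quotient.mk s' (G.sigma p)
    · by_cases h2 : Quotient.mk s' b = Quotient.mk s' (G.sigma p)
      · rw [h1, h2]
      · simp only [f, if_pos h1, if_neg h2] at hq; cases hq
    · by_cases h2 : Quotient.mk s' b = Quotient.mk s' (G.sigma p)
      · simp only [f, if_pos h2, if_neg h1] at hq; cases hq
      · simp only [f, if_neg h1, if_neg h2, Option.some_inj, hφ] at hq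
        have hab : s.r a b := Quotient.eq.mp hq
        rcases G.conn_decomp hA p hab with h | ⟨ha, hb⟩ | ⟨ha, hb⟩
        · exact Quotient.sound h
        · exact absurd (Quotient.sound hb : Quotient.mk s' (G.sigma p) = _).symm h2
        · exact absurd (Quotient.sound ha) h1
  calc Nat.card (Quotient s') ≤ Nat.card (Option (Quotient s)) :=
        Nat.card_le_card_of_injective f hinj
    _ = Nat.card (Quotient s) + 1 := by
        haveI : Fintype (Quotient s) := Fintype.ofFinite _
        rw [Nat.card_eq_fintype_card, Nat.card_eq_fintype_card, Fintype.card_option]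


lemma card_quot_congr {A B : Set H} (hAB : A = B) (hA : G.SClosed A) (hB : G.SClosed B) :
    Nat.card (Quotient (G.connSetoid A hA)) = Nat.card (Quotient (G.connSetoid B hB)) := by
  subst hAB
  rfl

lemma card_bound [Fintype H] : ∀ (A : Finset H) (hA : G.SClosed ↑A),
    2 * G.numVertices ≤ 2 * Nat.card (Quotient (G.connSetoid ↑A hA)) + A.card := by
  classical
  intro A
  induction A using Finset.strongInductionOn with
  | _ A ih =>
    intro hA
    rcases Finset.eq_empty_or_nonempty A with rfl | ⟨a, ha⟩
    · have e1 : Nat.card (Quotient (G.connSetoid ↑(∅:Finset H) hA)) = G.numVertices := by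
        rw [G.card_quot_congr (by simp : (↑(∅:Finset H):Set H) = ∅) hA
          (fun a h => absurd h (Set.notMem_empty _))]
        exact G.card_quot_empty
      rw [e1]; simp
    · have hsa : G.sigma a ∈ A := by
        have := hA a (by simpa using ha)
        simpa using this
      set A' : Finset H := A \ {a, G.sigma a} with hA'def
      have hsub : A' ⊂ A := by
        refine Finset.sdiff_ssubset ?_ (by simp)
        intro z hz
        simp only [Finset.mem_insert, Finset.mem_singleton] at hz
        rcases hz with rfl | rfl <;> assumption
      have hcoe : (↑A' : Set H) = ↑A \ {a, G.sigma a} := by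
        simp [hA'def, Finset.coe_sdiff]
      have hA'c : G.SClosed ↑A' := by
        rw [hcoe]; exact G.sclosed_sdiff_edge hA a
      have hpair : ({a, G.sigma a} : Finset H) ⊆ A := by
        intro z hz
        simp only [Finset.mem_insert, Finset.mem_singleton] at hz
        rcases hz with rfl | rfl <;> assumption
      have hpc : ({a, G.sigma a} : Finset H).card = 2 := by
        rw [Finset.card_insert_of_notMem (by simp [Ne.symm (G.noFix a)]),
          Finset.card_singleton]
      have hcard : A'.card = A.card - 2 := by
        rw [hA'def, Finset.card_sdiff_of_subset hpair, hpc]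
      have hAcard2 : 2 ≤ A.card := by
        calc 2 = ({a, G.sigma a} : Finset H).card := hpc.symm
          _ ≤ A.card := Finset.card_le_card hpair
      have hIH := ih A' hsub hA'c
      have hQ : Nat.card (Quotient (G.connSetoid ↑A' hA'c)) ≤
          Nat.card (Quotient (G.connSetoid ↑A hA)) + 1 := by
        rw [G.card_quot_congr hcoe hA'c (G.sclosed_sdiff_edge hA a)]
        exact G.card_quot_le hA a
      omega

lemma no_two_removable [Fintype H] (hEV : G.numEdges = G.numVertices)
    (hH : Fintype.card H = 2 * G.numEdges)
    {x y : H} (hd : x ≠ y) (hd2 : G.sigma x ≠ y) (hd3 : x ≠ G.sigma y)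
    (hd4 : G.sigma x ≠ G.sigma y)
    (hconn : ∀ a b, G.Conn (Set.univ \ {x, G.sigma x, y, G.sigma y}) a b) : False := by
  classical
  set S : Finset H := {x, G.sigma x, y, G.sigma y} with hS
  set A : Finset H := Finset.univ \ S with hA
  have hcoe : (↑A : Set H) = Set.univ \ {x, G.sigma x, y, G.sigma y} := by
    simp [hA, hS, Finset.coe_sdiff]
  have hAc : G.SClosed ↑A := by
    rw [hcoe]
    rintro z ⟨_, hz⟩
    refine ⟨Set.mem_univ _, ?_⟩
    simp only [Set.mem_insert_iff, Set.mem_singleton_iff] at hz ⊢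
    push_neg at hz ⊢
    refine ⟨?_, ?_, ?_, ?_⟩
    · intro h; exact hz.2.1 (by rw [G.sigma_eq_iff] at h; exact h)
    · intro h; exact hz.1 (G.sigma.injective h)
    · intro h; exact hz.2.2.2 (by rw [G.sigma_eq_iff] at h; exact h)
    · intro h; exact hz.2.2.1 (G.sigma.injective h)
  have hQ1 : Nat.card (Quotient (G.connSetoid ↑A hAc)) = 1 := by
    rw [Nat.card_eq_one_iff_exists]
    refine ⟨Quotient.mk _ x, fun q => ?_⟩
    obtain ⟨b, rfl⟩ := Quotient.exists_rep q
    exact Quotient.sound (by rw [← hcoe] at hconn; exact hconn b x)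
  have hScard : S.card = 4 := by
    rw [hS]
    rw [Finset.card_insert_of_notMem (by simp [Ne.symm (G.noFix x), hd, hd3]),
      Finset.card_insert_of_notMem (by simp [hd2, hd4]),
      Finset.card_insert_of_notMem (by simp [Ne.symm (G.noFix y)]),
      Finset.card_singleton]
  have hAcard : A.card = Fintype.card H - 4 := by
    rw [hA, Finset.card_sdiff_of_subset (Finset.subset_univ _), hScard, Finset.card_univ]
  have hbound := G.card_bound A hAc
  have hns : S ⊆ Finset.univ := Finset.subset_univ _
  have h4 : 4 ≤ Fintype.card H := by
    calc 4 = S.card := hScard.symm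
      _ ≤ Finset.univ.card := Finset.card_le_card hns
      _ = Fintype.card H := Finset.card_univ
  rw [hQ1, hAcard] at hbound
  omega


lemma sclosed_del_edge (x : H) : G.SClosed (Set.univ \ {x, G.sigma x}) :=
  G.sclosed_sdiff_edge G.sclosed_univ x

lemma isBridge_iff (x : H) :
    G.IsBridge x ↔ ¬ G.Conn (Set.univ \ {x, G.sigma x}) x (G.sigma x) := by
  unfold IsBridge Conn Rel
  constructor
  · intro h hc
    refine h (Relation.ReflTransGen.mono ?_ _ _ hc)
    rintro a b (h | h | ⟨h, ha⟩)
    · exact Or.inl h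
    · exact Or.inr (Or.inl h)
    · simp only [Set.mem_diff, Set.mem_univ, Set.mem_insert_iff, Set.mem_singleton_iff,
        true_and] at ha
      push_neg at ha
      exact Or.inr (Or.inr ⟨h, ha.1, ha.2⟩)
  · intro h hc
    refine h (Relation.ReflTransGen.mono ?_ _ _ hc)
    rintro a b (h | h | ⟨h, h1, h2⟩)
    · exact Or.inl h
    · exact Or.inr (Or.inl h)
    · refine Or.inr (Or.inr ⟨h, Set.mem_univ _, ?_⟩)
      simp only [Set.mem_insert_iff, Set.mem_singleton_iff]
      push_neg
      exact ⟨h1, h2⟩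

lemma isBridge_sigma_iff (x : H) : G.IsBridge (G.sigma x) ↔ G.IsBridge x := by
  rw [G.isBridge_iff, G.isBridge_iff]
  have hset : ({G.sigma x, G.sigma (G.sigma x)} : Set H) = {x, G.sigma x} := by
    rw [G.invol, Set.pair_comm]
  rw [hset, G.invol]
  constructor
  · intro h hc
    exact h (G.conn_symm (G.sclosed_del_edge x) hc)
  · intro h hc
    exact h (G.conn_symm (G.sclosed_del_edge x) hc)

lemma nonbridge_detour {x : H} (h : ¬ G.IsBridge x) :
    G.Conn (Set.univ \ {x, G.sigma x}) x (G.sigma x) := by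
  rw [G.isBridge_iff, not_not] at h
  exact h

lemma splice {A : Set H} (hA : G.SClosed A) {p : H}
    (hp : G.Conn (A \ {p, G.sigma p}) p (G.sigma p)) {a b : H} (h : G.Conn A a b) :
    G.Conn (A \ {p, G.sigma p}) a b := by
  rcases G.conn_decomp hA p h with h | ⟨h1, h2⟩ | ⟨h1, h2⟩
  · exact h
  · exact (h1.trans hp).trans h2
  · exact (h1.trans (G.conn_symm (G.sclosed_sdiff_edge hA p) hp)).trans h2

lemma conn_del_nonbridge {x : H} (h : ¬ G.IsBridge x) (a b : H) :
    G.Conn (Set.univ \ {x, G.sigma x}) a b := by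
  have := G.nonbridge_detour h
  refine G.splice G.sclosed_univ ?_ (G.conn_univ a b)
  exact this

lemma step_pow_succ (n : ℕ) (z : H) :
    (G.step ^ (n + 1)) z = G.sigma (G.rho ((G.step ^ n) z)) := by
  rw [pow_succ', Equiv.Perm.mul_apply]
  rfl

lemma bridge_sameCycle [Fintype H] {x : H} (hx : G.IsBridge x) :
    G.step.SameCycle x (G.sigma x) := by
  classical
  by_contra hsc
  rw [G.isBridge_iff] at hx
  apply hx
  have hper : x ∈ Function.periodicPts (⇑G.step) := by
    refine ⟨orderOf G.step, orderOf_pos G.step, ?_⟩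
    rw [Function.IsPeriodicPt, Function.IsFixedPt, Equiv.Perm.iterate_eq_pow,
      pow_orderOf_eq_one]
    rfl
  set m := Function.minimalPeriod (⇑G.step) x with hm
  have hmpos : 0 < m := Function.minimalPeriod_pos_of_mem_periodicPts hper
  have hmx : (G.step ^ m) x = x := by
    rw [← Equiv.Perm.iterate_eq_pow]
    exact Function.iterate_minimalPeriod
  have hex : ∃ k : ℕ, G.rho ((G.step ^ k) x) = x ∨ G.rho ((G.step ^ k) x) = G.sigma x := by
    refine ⟨m - 1, Or.inr ?_⟩
    have h1 : (G.step ^ (m - 1 + 1)) x = x := by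
      rw [Nat.sub_add_cancel hmpos, hmx]
    rw [G.step_pow_succ] at h1
    have := congrArg G.sigma h1
    rw [G.invol] at this
    exact this
  set k := Nat.find hex with hk
  have hkspec := Nat.find_spec hex
  have hkmin := fun j (hj : j < k) => Nat.find_min hex hj
  have hpath : ∀ j, j ≤ k → G.Conn (Set.univ \ {x, G.sigma x}) x ((G.step ^ j) x) := by
    intro j
    induction j with
    | zero => intro _; simpa [Conn] using (Relation.ReflTransGen.refl : G.Conn _ x x)
    | succ j ih =>
        intro hj
        have hjk : j < k := by omega
        have h1 := (ih (le_of_lt hjk)).tail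
          (Or.inl rfl : G.Rel _ ((G.step ^ j) x) (G.rho ((G.step ^ j) x)))
        refine h1.tail (Or.inr (Or.inr ⟨(G.step_pow_succ j x).symm, ?_⟩))
        refine ⟨Set.mem_univ _, ?_⟩
        simp only [Set.mem_insert_iff, Set.mem_singleton_iff]
        push_neg
        have := hkmin j hjk
        push_neg at this
        exact this
  rcases hkspec with h | h
  · exfalso
    apply hsc
    refine ⟨(k + 1 : ℕ), ?_⟩
    rw [zpow_natCast, G.step_pow_succ, h]
  · exact (hpath k le_rfl).tail (Or.inl h)


lemma conn_of_eq {A B : Set H} (hAB : A = B) {a b : H} (h : G.Conn A a b) :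
    G.Conn B a b := hAB ▸ h

section TwoCut

variable [Fintype H]
variable (hEV : G.numEdges = G.numVertices) (hH : Fintype.card H = 2 * G.numEdges)
variable {x y : H} (hx : ¬ G.IsBridge x) (hy : ¬ G.IsBridge y)
variable (h1 : y ≠ x) (h2 : y ≠ G.sigma x)

/-- both removed edges: the ambient set. -/
def Dset (x y : H) : Set H := (Set.univ \ {x, G.sigma x}) \ {y, G.sigma y}

lemma Dset_sclosed : G.SClosed (G.Dset x y) :=
  G.sclosed_sdiff_edge (G.sclosed_del_edge x) y

lemma Dset_eq : G.Dset x y = Set.univ \ {x, G.sigma x, y, G.sigma y} := by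
  ext z
  simp only [Dset, Set.mem_diff, Set.mem_univ, true_and, Set.mem_insert_iff,
    Set.mem_singleton_iff]
  tauto

lemma Dset_comm : G.Dset x y = G.Dset y x := by
  rw [G.Dset_eq, G.Dset_eq]
  ext z
  simp only [Set.mem_diff, Set.mem_univ, true_and, Set.mem_insert_iff,
    Set.mem_singleton_iff]
  tauto

include h1 h2 in
lemma dist4 : x ≠ y ∧ G.sigma x ≠ y ∧ x ≠ G.sigma y ∧ G.sigma x ≠ G.sigma y := by
  refine ⟨h1.symm, h2.symm, ?_, fun h => h1.symm (G.sigma.injective h)⟩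
  intro h
  exact h2 (by rw [h, G.invol])

include hEV hH hx hy h1 h2 in
lemma not_conn_D_full : ¬ (∀ a b, G.Conn (G.Dset x y) a b) := by
  intro hconn
  obtain ⟨d1, d2, d3, d4⟩ := G.dist4 h1 h2
  exact G.no_two_removable hEV hH d1 d2 d3 d4
    (fun a b => G.conn_of_eq (G.Dset_eq) (hconn a b))

include hEV hH hx hy h1 h2 in
lemma F1 : ¬ G.Conn (G.Dset x y) y (G.sigma y) := by
  intro hyy
  refine G.not_conn_D_full hEV hH hx hy h1 h2 (fun a b => ?_)
  exact G.splice (G.sclosed_del_edge x) hyy (G.conn_del_nonbridge hx a b)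

include hEV hH hx hy h1 h2 in
lemma F1' : ¬ G.Conn (G.Dset x y) x (G.sigma x) := by
  intro hxx
  refine G.not_conn_D_full hEV hH hx hy h1 h2 (fun a b => ?_)
  refine G.conn_of_eq (G.Dset_comm).symm ?_
  exact G.splice (G.sclosed_del_edge y) (G.conn_of_eq (G.Dset_comm) hxx)
    (G.conn_del_nonbridge hy a b)

/-- If `u`'s `D`-class avoids `y` and `σ y`, then connectivity avoiding only the
edge of `x` implies connectivity avoiding both edges. -/
lemma boundary {u z : H} (hu1 : ¬ G.Conn (G.Dset x y) u y)
    (hu2 : ¬ G.Conn (G.Dset x y) u (G.sigma y))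
    (h : G.Conn (Set.univ \ {x, G.sigma x}) u z) : G.Conn (G.Dset x y) u z := by
  induction h with
  | refl => exact Relation.ReflTransGen.refl
  | @tail c d huc hcd ih =>
      rcases hcd with h | h | ⟨h, hc⟩
      · exact ih.tail (Or.inl h)
      · exact ih.tail (Or.inr (Or.inl h))
      · by_cases hcy : c = y
        · exact absurd (hcy ▸ ih) hu1
        by_cases hcy' : c = G.sigma y
        · exact absurd (hcy' ▸ ih) hu2
        · refine ih.tail (Or.inr (Or.inr ⟨h, ?_⟩))
          refine ⟨hc, ?_⟩
          simp only [Set.mem_insert_iff, Set.mem_singleton_iff]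
          push_neg
          exact ⟨hcy, hcy'⟩

include hEV hH hx hy h1 h2 in
lemma F2 : G.Conn (G.Dset x y) x y ∨ G.Conn (G.Dset x y) (G.sigma x) y := by
  by_contra hcon
  push_neg at hcon
  obtain ⟨hc1, hc2⟩ := hcon
  have hDc := G.Dset_sclosed (x := x) (y := y)
  by_cases h3 : G.Conn (G.Dset x y) x (G.sigma y)
  · by_cases h4 : G.Conn (G.Dset x y) (G.sigma x) (G.sigma y)
    · exact G.F1' hEV hH hx hy h1 h2 (h3.trans (G.conn_symm hDc h4))
    · have hb := G.boundary (u := G.sigma x) (z := x) hc2 h4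
        (G.conn_symm (G.sclosed_del_edge x) (G.nonbridge_detour hx))
      exact G.F1' hEV hH hx hy h1 h2 (G.conn_symm hDc hb)
  · have hb := G.boundary (u := x) (z := G.sigma x) hc1 h3 (G.nonbridge_detour hx)
    exact G.F1' hEV hH hx hy h1 h2 hb

end TwoCut


section Parity

variable [Fintype H]

lemma sameCycle_rho_symm_iff (x c : H) :
    G.step.SameCycle x (G.rho.symm c) ↔ G.step.SameCycle x (G.sigma c) := by
  have : G.step (G.rho.symm c) = G.sigma c := by
    show G.sigma (G.rho (G.rho.symm c)) = G.sigma c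
    rw [G.rho.apply_symm_apply]
  rw [← this]
  exact (Equiv.Perm.sameCycle_apply_right).symm

lemma parity_sigma_face (hEV : G.numEdges = G.numVertices)
    (hH : Fintype.card H = 2 * G.numEdges)
    {x y : H} (hx : ¬ G.IsBridge x) (hy : ¬ G.IsBridge y)
    (hsc : G.step.SameCycle x (G.sigma x)) (hyf : G.step.SameCycle x y)
    (h1 : y ≠ x) (h2 : y ≠ G.sigma x) :
    G.step.SameCycle x (G.sigma y) := by
  classical
  obtain ⟨d1, d2, d3, d4⟩ := G.dist4 h1 h2
  set D := G.Dset x y with hD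
  have hDc : G.SClosed D := G.Dset_sclosed
  set s : H → ZMod 2 := fun z => if G.Conn D z y then 1 else 0 with hs
  -- basic transport facts for s
  have stab : ∀ {u v : H}, G.Conn D u v → s u = s v := by
    intro u v huv
    by_cases h : G.Conn D v y
    · show (if G.Conn D u y then (1 : ZMod 2) else 0) = (if G.Conn D v y then 1 else 0)
      rw [if_pos (show G.Conn D u y from huv.trans h), if_pos h]
    · show (if G.Conn D u y then (1 : ZMod 2) else 0) = (if G.Conn D v y then 1 else 0)
      rw [if_neg (show ¬ G.Conn D u y from fun hh => h ((G.conn_symm hDc huv).trans hh)), if_neg h]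
  have P1 : ∀ z, s (G.rho z) = s z := fun z =>
    stab (G.conn_symm hDc (G.conn_rho D z))
  have P2 : ∀ c, c ≠ x → c ≠ G.sigma x → c ≠ y → c ≠ G.sigma y → s (G.sigma c) = s c := by
    intro c e1 e2 e3 e4
    have hcD : c ∈ D := by
      rw [hD, Dset]
      refine ⟨⟨Set.mem_univ _, ?_⟩, ?_⟩ <;>
        · simp only [Set.mem_insert_iff, Set.mem_singleton_iff]
          push_neg
          tauto
    exact stab (G.conn_symm hDc (G.conn_sigma hcD))
  have P3a : s y = 1 := by
    show (if G.Conn D y y then (1 : ZMod 2) else 0) = 1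
    rw [if_pos (show G.Conn D y y from Relation.ReflTransGen.refl)]
  have P3b : s (G.sigma y) = 0 := by
    have hF1 := G.F1 hEV hH hx hy h1 h2
    have : ¬ G.Conn D (G.sigma y) y := fun h => hF1 (G.conn_symm hDc h)
    show (if G.Conn D (G.sigma y) y then (1 : ZMod 2) else 0) = 0
    rw [if_neg this]
  have P4 : s x + s (G.sigma x) = 1 := by
    have hF1' := G.F1' hEV hH hx hy h1 h2
    rcases G.F2 hEV hH hx hy h1 h2 with hc | hc
    · have hsx : s x = 1 := by
        show (if G.Conn D x y then (1 : ZMod 2) else 0) = 1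
        rw [if_pos (show G.Conn D x y from hc)]
      have hnot : ¬ G.Conn D (G.sigma x) y := by
        intro hc'
        exact hF1' (hc.trans (G.conn_symm hDc hc'))
      have hsx' : s (G.sigma x) = 0 := by
        show (if G.Conn D (G.sigma x) y then (1 : ZMod 2) else 0) = 0
        rw [if_neg hnot]
      rw [hsx, hsx', add_zero]
    · have hsx' : s (G.sigma x) = 1 := by
        show (if G.Conn D (G.sigma x) y then (1 : ZMod 2) else 0) = 1
        rw [if_pos (show G.Conn D (G.sigma x) y from hc)]
      have hnot : ¬ G.Conn D x y := by
        intro hc'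
        exact hF1' (hc'.trans (G.conn_symm hDc hc))
      have hsx : s x = 0 := by
        show (if G.Conn D x y then (1 : ZMod 2) else 0) = 0
        rw [if_neg hnot]
      rw [hsx, hsx', zero_add]
  -- the face as a finset
  set F : Finset H := Finset.univ.filter (fun z => G.step.SameCycle x z) with hF
  have hmemF : ∀ z, z ∈ F ↔ G.step.SameCycle x z := by
    intro z; simp [hF]
  -- total sum is zero
  have hT0 : ∑ z ∈ F, (s z + s (G.step z)) = 0 := by
    rw [Finset.sum_add_distrib]
    have : ∑ z ∈ F, s (G.step z) = ∑ z ∈ F, s z := by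
      refine Finset.sum_nbij' (fun z => G.step z) (fun z => G.step.symm z) ?_ ?_ ?_ ?_ ?_
      · intro a ha
        rw [hmemF] at ha ⊢
        exact Equiv.Perm.sameCycle_apply_right.mpr ha
      · intro a ha
        rw [hmemF] at ha ⊢
        have : G.step (G.step.symm a) = a := G.step.apply_symm_apply a
        rw [← this] at ha
        exact Equiv.Perm.sameCycle_apply_right.mp ha
      · intro a _; exact G.step.symm_apply_apply a
      · intro a _; exact G.step.apply_symm_apply a
      · intro a _; rfl
    rw [this, ← two_mul]
    have h2 : (2 : ZMod 2) = 0 := by decide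
    rw [h2, zero_mul]
  -- rewrite the summand through ρ
  set g : H → ZMod 2 := fun c => s c + s (G.sigma c) with hg
  have hsummand : ∀ z, s z + s (G.step z) = g (G.rho z) := by
    intro z
    show s z + s (G.sigma (G.rho z)) = s (G.rho z) + s (G.sigma (G.rho z))
    rw [P1]
  have hT1 : ∑ z ∈ F, g (G.rho z) = 0 := by
    rw [← hT0]
    exact (Finset.sum_congr rfl (fun z _ => (hsummand z).symm))
  -- g vanishes off the four special points
  have hgvanish : ∀ c, c ≠ x → c ≠ G.sigma x → c ≠ y → c ≠ G.sigma y → g c = 0 := by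
    intro c e1 e2 e3 e4
    show s c + s (G.sigma c) = 0
    rw [P2 c e1 e2 e3 e4, ← two_mul]
    have h2 : (2 : ZMod 2) = 0 := by decide
    rw [h2, zero_mul]
  -- restrict the sum to the four preimages
  set S4 : Finset H := {G.rho.symm x, G.rho.symm (G.sigma x), G.rho.symm y,
    G.rho.symm (G.sigma y)} with hS4
  have hT2 : ∑ z ∈ F, g (G.rho z) = ∑ z ∈ F ∩ S4, g (G.rho z) := by
    refine (Finset.sum_subset Finset.inter_subset_left ?_).symm
    intro z hzF hz
    have hzS4 : z ∉ S4 := fun hm => hz (Finset.mem_inter.mpr ⟨hzF, hm⟩)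
    simp only [hS4, Finset.mem_insert, Finset.mem_singleton] at hzS4
    push_neg at hzS4
    obtain ⟨e1, e2, e3, e4⟩ := hzS4
    refine hgvanish (G.rho z) ?_ ?_ ?_ ?_
    · intro h; exact e1 (by rw [← h, G.rho.symm_apply_apply])
    · intro h; exact e2 (by rw [← h, G.rho.symm_apply_apply])
    · intro h; exact e3 (by rw [← h, G.rho.symm_apply_apply])
    · intro h; exact e4 (by rw [← h, G.rho.symm_apply_apply])
  -- now compute the sum over the four points
  have hd1 : G.rho.symm x ≠ G.rho.symm (G.sigma x) := fun h =>
    (Ne.symm (G.noFix x)) (G.rho.symm.injective h)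
  have hd2 : G.rho.symm x ≠ G.rho.symm y := fun h => h1 (G.rho.symm.injective h).symm
  have hd3 : G.rho.symm x ≠ G.rho.symm (G.sigma y) := fun h =>
    d3 (G.rho.symm.injective h)
  have hd4 : G.rho.symm (G.sigma x) ≠ G.rho.symm y := fun h =>
    d2 (G.rho.symm.injective h)
  have hd5 : G.rho.symm (G.sigma x) ≠ G.rho.symm (G.sigma y) := fun h =>
    d4 (G.rho.symm.injective h)
  have hd6 : G.rho.symm y ≠ G.rho.symm (G.sigma y) := fun h =>
    (Ne.symm (G.noFix y)) (G.rho.symm.injective h)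
  have hinterF : F ∩ S4 = S4.filter (fun z => z ∈ F) := by
    rw [Finset.filter_mem_eq_inter, Finset.inter_comm]
  have hT3 : ∑ z ∈ F ∩ S4, g (G.rho z) = ∑ z ∈ S4, if z ∈ F then g (G.rho z) else 0 := by
    rw [hinterF, Finset.sum_filter]
  -- membership facts
  have hm1 : G.rho.symm x ∈ F := by
    rw [hmemF, G.sameCycle_rho_symm_iff]
    exact hsc
  have hm2 : G.rho.symm (G.sigma x) ∈ F := by
    rw [hmemF, G.sameCycle_rho_symm_iff, G.invol]
  have hm4 : G.rho.symm (G.sigma y) ∈ F := by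
    rw [hmemF, G.sameCycle_rho_symm_iff, G.invol]
    exact hyf
  -- values of g
  have hgx : g x = 1 := P4
  have hgsx : g (G.sigma x) = 1 := by
    show s (G.sigma x) + s (G.sigma (G.sigma x)) = 1
    rw [G.invol, add_comm]
    exact P4
  have hgy : g y = 1 := by
    show s y + s (G.sigma y) = 1
    rw [P3a, P3b, add_zero]
  have hgsy : g (G.sigma y) = 1 := by
    show s (G.sigma y) + s (G.sigma (G.sigma y)) = 1
    rw [G.invol, P3a, P3b, zero_add]
  -- expand the four-element sum
  have hexp : ∑ z ∈ S4, (if z ∈ F then g (G.rho z) else 0) =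
      (if G.rho.symm x ∈ F then g x else 0) +
      ((if G.rho.symm (G.sigma x) ∈ F then g (G.sigma x) else 0) +
      ((if G.rho.symm y ∈ F then g y else 0) +
      (if G.rho.symm (G.sigma y) ∈ F then g (G.sigma y) else 0))) := by
    rw [hS4]
    rw [Finset.sum_insert (by simp [hd1, hd2, hd3]),
      Finset.sum_insert (by simp [hd4, hd5]),
      Finset.sum_insert (by simp [hd6]),
      Finset.sum_singleton]
    simp only [G.rho.apply_symm_apply]
  -- conclude
  by_contra hne
  have hm3 : G.rho.symm y ∉ F := by
    rw [hmemF, G.sameCycle_rho_symm_iff]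
    exact hne
  have : (0 : ZMod 2) = 1 := by
    calc (0 : ZMod 2) = ∑ z ∈ F, g (G.rho z) := hT1.symm
      _ = ∑ z ∈ S4, if z ∈ F then g (G.rho z) else 0 := by rw [hT2, hT3]
      _ = 1 := by
          rw [hexp, if_pos hm1, if_pos hm2, if_pos hm4, if_neg hm3, hgx, hgsx, hgsy]
          decide
  exact absurd this (by decide)

end Parity


section Star

variable [Fintype H]

/-- If there are at least two Green walks, then no non-bridge half-edge lies on the
same Green walk as its partner. -/
lemma not_sameCycle_sigma (hEV : G.numEdges = G.numVertices)
    (hH : Fintype.card H = 2 * G.numEdges)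
    {w₁ w₂ : H} (hdist : ¬ G.step.SameCycle w₁ w₂)
    {x : H} (hx : ¬ G.IsBridge x) : ¬ G.step.SameCycle x (G.sigma x) := by
  intro hsc
  -- the face of x is closed under σ
  have hface : ∀ y, G.step.SameCycle x y → G.step.SameCycle x (G.sigma y) := by
    intro y hy
    by_cases hyb : G.IsBridge y
    · exact hy.trans (G.bridge_sameCycle hyb)
    by_cases he1 : y = x
    · rw [he1]; exact hsc
    by_cases he2 : y = G.sigma x
    · rw [he2, G.invol]
    · exact G.parity_sigma_face hEV hH hx hyb hsc hy he1 he2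
  -- hence closed under everything, hence everything is on x's walk
  have hstepiff : ∀ a, G.step.SameCycle x a ↔ G.step.SameCycle x (G.step a) :=
    fun a => Equiv.Perm.sameCycle_apply_right.symm
  have hrho : ∀ a, G.step.SameCycle x a ↔ G.step.SameCycle x (G.rho a) := by
    intro a
    constructor
    · intro h
      have h2 : G.step.SameCycle x (G.step a) := (hstepiff a).mp h
      have h3 := hface _ h2
      have : G.sigma (G.step a) = G.rho a := by
        show G.sigma (G.sigma (G.rho a)) = G.rho a
        rw [G.invol]
      rwa [this] at h3
    · intro h
      have h3 := hface _ h
      have : G.sigma (G.rho a) = G.step a := rfl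
      rw [this] at h3
      exact (hstepiff a).mpr h3
  have hsigma : ∀ a, G.step.SameCycle x a ↔ G.step.SameCycle x (G.sigma a) := by
    intro a
    constructor
    · exact hface a
    · intro h
      have := hface _ h
      rwa [G.invol] at this
  have hout : ∀ a b, Relation.EqvGen (fun a b => G.sigma a = b ∨ G.rho a = b) a b →
      (G.step.SameCycle x a ↔ G.step.SameCycle x b) := by
    intro a b h
    induction h with
    | rel a b hab =>
        rcases hab with h | h
        · rw [← h]; exact hsigma a
        · rw [← h]; exact hrho a
    | refl a => exact Iff.rfl
    | symm a b _ ih => exact ih.symm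
    | trans a b c _ _ ih1 ih2 => exact ih1.trans ih2
  have hw1 : G.step.SameCycle x w₁ := (hout x w₁ (G.conn x w₁)).mp (by rfl)
  have hw2 : G.step.SameCycle x w₂ := (hout x w₂ (G.conn x w₂)).mp (by rfl)
  exact hdist (hw1.symm.trans hw2)

end Star


section Counting2

variable [Fintype H]

lemma perm_mem_periodicPts (f : Equiv.Perm H) (w : H) :
    w ∈ Function.periodicPts ⇑f := by
  refine ⟨orderOf f, orderOf_pos f, ?_⟩
  rw [Function.IsPeriodicPt, Function.IsFixedPt, Equiv.Perm.iterate_eq_pow,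
    pow_orderOf_eq_one]
  rfl

lemma sigma_sameCycle_iff_s4 (a b : H) :
    G.sigma.SameCycle a b ↔ (b = a ∨ b = G.sigma a) := by
  have hsq : G.sigma * G.sigma = 1 := by
    ext z
    simp [Equiv.Perm.mul_apply, G.invol]
  constructor
  · rintro ⟨i, hi⟩
    rcases Int.even_or_odd i with ⟨k, hk⟩ | ⟨k, hk⟩
    · left
      subst hk
      rw [← two_mul, zpow_mul, show ((2:ℤ)) = ((2:ℕ):ℤ) by norm_num, zpow_natCast,
        pow_two, hsq, one_zpow] at hi
      simp at hi
      exact hi.symm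
    · right
      subst hk
      rw [zpow_add, zpow_one, zpow_mul, show ((2:ℤ)) = ((2:ℕ):ℤ) by norm_num,
        zpow_natCast, pow_two, hsq, one_zpow] at hi
      simp at hi
      exact hi.symm
  · rintro (rfl | rfl)
    · exact Equiv.Perm.SameCycle.refl _ _
    · exact ⟨1, by simp⟩

lemma card_eq_twice_numEdges : Fintype.card H = 2 * G.numEdges := by
  classical
  set st := sameCycleSetoid G.sigma with hst
  have e1 : Fintype.card H = Fintype.card ((q : Quotient st) × {z : H // Quotient.mk st z = q}) :=
    (Fintype.card_congr (Equiv.sigmaFiberEquiv (fun z : H => Quotient.mk st z))).symm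
  rw [e1, Fintype.card_sigma]
  have hfib : ∀ q : Quotient st, Fintype.card {z : H // Quotient.mk st z = q} = 2 := by
    intro q
    obtain ⟨a, rfl⟩ := Quotient.exists_rep q
    have hiff : ∀ z : H, (Quotient.mk st z = Quotient.mk st a) ↔ (z = a ∨ z = G.sigma a) := by
      intro z
      rw [Quotient.eq]
      show G.sigma.SameCycle z a ↔ _
      rw [G.sigma_sameCycle_iff_s4]
      constructor
      · rintro (rfl | h)
        · left; rfl
        · right; rw [h, G.invol]
      · rintro (rfl | h)
        · left; rfl
        · right; rw [h, G.invol]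
    let e : {z : H // Quotient.mk st z = Quotient.mk st a} ≃ Bool :=
      { toFun := fun z => if z.1 = a then true else false
        invFun := fun b => if b then ⟨a, rfl⟩ else
          ⟨G.sigma a, by rw [hiff]; right; rfl⟩
        left_inv := by
          rintro ⟨z, hz⟩
          rcases (hiff z).mp hz with h | h
          · subst h; simp
          · subst h; simp [G.noFix a]
        right_inv := by
          intro b
          cases b
          · simp [G.noFix a]
          · simp }
    rw [Fintype.card_congr e, Fintype.card_bool]
  rw [Finset.sum_congr rfl (fun q _ => hfib q), Finset.sum_const, Finset.card_univ,
    smul_eq_mul]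
  have : G.numEdges = Fintype.card (Quotient st) := by
    rw [numEdges, Nat.card_eq_fintype_card]
  rw [this, mul_comm]

lemma card_face_eq_minimalPeriod (w : H) :
    Nat.card {z : H // G.step.SameCycle w z} = Function.minimalPeriod (⇑G.step) w := by
  classical
  set m := Function.minimalPeriod (⇑G.step) w with hm
  have hmpos : 0 < m := Function.minimalPeriod_pos_of_mem_periodicPts
    (perm_mem_periodicPts G.step w)
  have hmw : (⇑G.step)^[m] w = w := Function.iterate_minimalPeriod
  let f : Fin m → {z : H // G.step.SameCycle w z} :=
    fun i => ⟨(G.step ^ (i : ℕ)) w, ⟨(i : ℕ), by rw [zpow_natCast]⟩⟩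
  have hbij : Function.Bijective f := by
    constructor
    · intro i j hij
      have h0 : (G.step ^ (i : ℕ)) w = (G.step ^ (j : ℕ)) w := congrArg Subtype.val hij
      have h1 : (⇑G.step)^[(i:ℕ)] w = (⇑G.step)^[(j:ℕ)] w := by
        rw [Equiv.Perm.iterate_eq_pow, Equiv.Perm.iterate_eq_pow]
        exact h0
      have := Function.iterate_injOn_Iio_minimalPeriod (f := ⇑G.step) (x := w)
        (show ((i:ℕ) : ℕ) ∈ Set.Iio m from i.2) (show ((j:ℕ) : ℕ) ∈ Set.Iio m from j.2) h1
      exact Fin.ext this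
    · rintro ⟨z, hz⟩
      obtain ⟨n, -, -, hn⟩ := Equiv.Perm.SameCycle.exists_pow_eq G.step hz
      refine ⟨⟨n % m, Nat.mod_lt _ hmpos⟩, ?_⟩
      have : (G.step ^ (n % m)) w = z := by
        rw [← Equiv.Perm.iterate_eq_pow, Function.iterate_mod_minimalPeriod_eq,
          Equiv.Perm.iterate_eq_pow, hn]
      exact Subtype.ext this
  rw [Nat.card_congr (Equiv.ofBijective f hbij).symm, Nat.card_eq_fintype_card,
    Fintype.card_fin]

lemma minimalPeriod_eq_of_sameCycle {a b : H} (h : G.step.SameCycle a b) :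
    Function.minimalPeriod (⇑G.step) a = Function.minimalPeriod (⇑G.step) b := by
  rw [← G.card_face_eq_minimalPeriod a, ← G.card_face_eq_minimalPeriod b]
  exact Nat.card_congr (Equiv.subtypeEquivRight (fun z =>
    ⟨fun hz => h.symm.trans hz, fun hz => h.trans hz⟩))

lemma step_sq_iterate (k : ℕ) (z : H) : (⇑(G.step ^ 2))^[k] z = (⇑G.step)^[2 * k] z := by
  rw [Equiv.Perm.iterate_eq_pow, Equiv.Perm.iterate_eq_pow, ← pow_mul]

lemma sq_sameCycle_iff (hoddall : ∀ a : H, Odd (Function.minimalPeriod (⇑G.step) a))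
    (a b : H) : (G.step ^ 2).SameCycle a b ↔ G.step.SameCycle a b := by
  classical
  have hpow2 : ∀ (k : ℕ) (z : H), ((G.step ^ 2 : Equiv.Perm H) ^ (k : ℤ)) z =
      (G.step ^ (2 * k : ℕ)) z := by
    intro k z
    rw [zpow_natCast, ← pow_mul]
  constructor
  · rintro ⟨i, hi⟩
    refine ⟨2 * i, ?_⟩
    have h2 : (G.step : Equiv.Perm H) ^ ((2 : ℤ) * i) = (G.step ^ 2 : Equiv.Perm H) ^ i := by
      rw [zpow_mul, show ((2:ℤ)) = ((2:ℕ):ℤ) by norm_num, zpow_natCast]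
    rw [h2]
    exact hi
  · intro h
    obtain ⟨n, -, -, hn⟩ := Equiv.Perm.SameCycle.exists_pow_eq G.step h
    set m := Function.minimalPeriod (⇑G.step) a with hm
    have hma : (G.step ^ m) a = a := by
      rw [← Equiv.Perm.iterate_eq_pow]
      exact Function.iterate_minimalPeriod
    rcases Nat.even_or_odd n with ⟨k, hk⟩ | hodd2
    · refine ⟨(k : ℤ), ?_⟩
      rw [hpow2, show 2 * k = n by omega, hn]
    · obtain ⟨r, hr⟩ := hoddall a
      obtain ⟨j, hj⟩ : ∃ j, n + m = 2 * j := by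
        obtain ⟨t, ht⟩ := hodd2
        exact ⟨t + r + 1, by omega⟩
      refine ⟨(j : ℤ), ?_⟩
      rw [hpow2, show 2 * j = n + m from hj.symm, pow_add, Equiv.Perm.mul_apply, hma, hn]

lemma minimalPeriod_sq {w : H} (hodd : Odd (Function.minimalPeriod (⇑G.step) w)) :
    Function.minimalPeriod (⇑(G.step ^ 2)) w = Function.minimalPeriod (⇑G.step) w := by
  set m := Function.minimalPeriod (⇑G.step) w with hm
  set p := Function.minimalPeriod (⇑(G.step ^ 2)) w with hp
  have hmw : (⇑G.step)^[m] w = w := Function.iterate_minimalPeriod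
  have hpw : (⇑(G.step ^ 2))^[p] w = w := Function.iterate_minimalPeriod
  have h1 : p ∣ m := by
    have : Function.IsPeriodicPt (⇑(G.step ^ 2)) m w := by
      rw [Function.IsPeriodicPt, Function.IsFixedPt, G.step_sq_iterate, mul_comm,
        Function.iterate_mul]
      rw [Function.iterate_fixed hmw]
    exact Function.IsPeriodicPt.minimalPeriod_dvd this
  have h2 : m ∣ 2 * p := by
    have : Function.IsPeriodicPt (⇑G.step) (2 * p) w := by
      rw [Function.IsPeriodicPt, Function.IsFixedPt, ← G.step_sq_iterate]
      exact hpw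
    exact Function.IsPeriodicPt.minimalPeriod_dvd this
  have hcop : Nat.Coprime m 2 := Nat.coprime_two_right.mpr hodd
  have h3 : m ∣ p := (Nat.Coprime.dvd_of_dvd_mul_left hcop) h2
  exact Nat.dvd_antisymm h1 h3

lemma card_split (p q : H → Prop) :
    Nat.card {z : H // p z} =
      Nat.card {z : H // p z ∧ q z} + Nat.card {z : H // p z ∧ ¬ q z} := by
  classical
  rw [Nat.card_eq_fintype_card, Nat.card_eq_fintype_card, Nat.card_eq_fintype_card,
    Fintype.card_subtype, Fintype.card_subtype, Fintype.card_subtype]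
  rw [← Finset.filter_filter, ← Finset.filter_filter]
  exact (Finset.card_filter_add_card_filter_not (s := Finset.univ.filter p) q).symm

end Counting2

end RibbonGraph

/-- Let `G` be a ribbon graph with a unique cycle, of odd length `l`
(so `G` is connected and unicyclic, and the non-bridge edges — the edges of the
cycle — account for `2 * l` half-edges).  `G` has exactly two distinct Green walks,
with representatives `w₁` (the inside) and `w₂` (the outside); suppose `n₁` of the
tree (bridge) edges have their half-edges on the walk of `w₁` and `n₂` on the walk
of `w₂`.  Then `G` has exactly two distinct double-stepped Green walks, of lengths
`l + 2 * n₁` and `l + 2 * n₂` respectively. -/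
theorem unicyclic_odd_double_stepped_green_walks
    (H : Type) [Fintype H] (G : RibbonGraph H) (l n₁ n₂ : ℕ) (hodd : Odd l)
    (hunicyclic : G.numEdges = G.numVertices)
    (hcyc : Nat.card {x : H // ¬ G.IsBridge x} = 2 * l)
    (w₁ w₂ : H)
    (hdist : ¬ G.step.SameCycle w₁ w₂)
    (hall : ∀ x : H, G.step.SameCycle w₁ x ∨ G.step.SameCycle w₂ x)
    (hin : Nat.card {x : H // G.IsBridge x ∧ G.step.SameCycle w₁ x} = 2 * n₁)
    (hout : Nat.card {x : H // G.IsBridge x ∧ G.step.SameCycle w₂ x} = 2 * n₂) :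
    Nat.card (Quotient (sameCycleSetoid (G.step ^ 2))) = 2 ∧
      Function.minimalPeriod (⇑(G.step ^ 2)) w₁ = l + 2 * n₁ ∧
      Function.minimalPeriod (⇑(G.step ^ 2)) w₂ = l + 2 * n₂ := by
  classical
  have hH : Fintype.card H = 2 * G.numEdges := G.card_eq_twice_numEdges
  have hEV := hunicyclic
  have hexcl : ∀ z : H, ¬ (G.step.SameCycle w₁ z ∧ G.step.SameCycle w₂ z) := by
    rintro z ⟨a, b⟩
    exact hdist (a.trans b.symm)
  have hnotiff : ∀ z : H, (¬ G.step.SameCycle w₁ z) ↔ G.step.SameCycle w₂ z := by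
    intro z
    constructor
    · intro h
      rcases hall z with h' | h'
      · exact absurd h' h
      · exact h'
    · intro h h'
      exact hexcl z ⟨h', h⟩
  have hstar : ∀ z : H, ¬ G.IsBridge z → ¬ G.step.SameCycle z (G.sigma z) :=
    fun z hz => G.not_sameCycle_sigma hEV hH hdist hz
  -- the two non-bridge parts have equal cardinality via σ
  have hc12 : Nat.card {z : H // ¬ G.IsBridge z ∧ G.step.SameCycle w₁ z} =
      Nat.card {z : H // ¬ G.IsBridge z ∧ G.step.SameCycle w₂ z} := by
    refine Nat.card_congr ?_
    have hto : ∀ (u : H), ¬ G.IsBridge u → G.step.SameCycle w₁ u →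
        (¬ G.IsBridge (G.sigma u) ∧ G.step.SameCycle w₂ (G.sigma u)) := by
      intro u hu hf
      refine ⟨fun hb => hu ((G.isBridge_sigma_iff u).mp hb), ?_⟩
      rw [← hnotiff]
      intro hh
      exact hstar u hu (hf.symm.trans hh)
    have hfrom : ∀ (u : H), ¬ G.IsBridge u → G.step.SameCycle w₂ u →
        (¬ G.IsBridge (G.sigma u) ∧ G.step.SameCycle w₁ (G.sigma u)) := by
      intro u hu hf
      refine ⟨fun hb => hu ((G.isBridge_sigma_iff u).mp hb), ?_⟩
      rcases hall (G.sigma u) with h' | h'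
      · exact h'
      · exact absurd (hf.symm.trans h') (hstar u hu)
    exact
      { toFun := fun z => ⟨G.sigma z.1, hto z.1 z.2.1 z.2.2⟩
        invFun := fun z => ⟨G.sigma z.1, hfrom z.1 z.2.1 z.2.2⟩
        left_inv := by
          rintro ⟨z, hz⟩
          exact Subtype.ext (G.invol z)
        right_inv := by
          rintro ⟨z, hz⟩
          exact Subtype.ext (G.invol z) }
  -- split the non-bridge half-edges between the two walks
  have hsplit : Nat.card {z : H // ¬ G.IsBridge z} =
      Nat.card {z : H // ¬ G.IsBridge z ∧ G.step.SameCycle w₁ z} +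
      Nat.card {z : H // ¬ G.IsBridge z ∧ G.step.SameCycle w₂ z} := by
    rw [RibbonGraph.card_split (fun z => ¬ G.IsBridge z) (fun z => G.step.SameCycle w₁ z)]
    congr 1
    exact Nat.card_congr (Equiv.subtypeEquivRight (fun z =>
      and_congr_right (fun _ => hnotiff z)))
  set c₁ := Nat.card {z : H // ¬ G.IsBridge z ∧ G.step.SameCycle w₁ z} with hc₁
  have hc1l : c₁ = l := by
    rw [hcyc] at hsplit
    omega
  set c₂ := Nat.card {z : H // ¬ G.IsBridge z ∧ G.step.SameCycle w₂ z} with hc₂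
  have hc2l : c₂ = l := by
    rw [hcyc] at hsplit
    omega
  -- the sizes of the two walks
  have hface1 : Nat.card {z : H // G.step.SameCycle w₁ z} = l + 2 * n₁ := by
    rw [RibbonGraph.card_split (fun z => G.step.SameCycle w₁ z) (fun z => G.IsBridge z)]
    have e1 : Nat.card {z : H // G.step.SameCycle w₁ z ∧ G.IsBridge z} = 2 * n₁ := by
      rw [← hin]
      exact Nat.card_congr (Equiv.subtypeEquivRight (fun z => and_comm))
    have e2 : Nat.card {z : H // G.step.SameCycle w₁ z ∧ ¬ G.IsBridge z} = c₁ := by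
      rw [hc₁]
      exact Nat.card_congr (Equiv.subtypeEquivRight (fun z => and_comm))
    rw [e1, e2, hc1l]
    omega
  have hface2 : Nat.card {z : H // G.step.SameCycle w₂ z} = l + 2 * n₂ := by
    rw [RibbonGraph.card_split (fun z => G.step.SameCycle w₂ z) (fun z => G.IsBridge z)]
    have e1 : Nat.card {z : H // G.step.SameCycle w₂ z ∧ G.IsBridge z} = 2 * n₂ := by
      rw [← hout]
      exact Nat.card_congr (Equiv.subtypeEquivRight (fun z => and_comm))
    have e2 : Nat.card {z : H // G.step.SameCycle w₂ z ∧ ¬ G.IsBridge z} = c₂ := by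
      rw [hc₂]
      exact Nat.card_congr (Equiv.subtypeEquivRight (fun z => and_comm))
    rw [e1, e2, hc2l]
    omega
  have hm1 : Function.minimalPeriod (⇑G.step) w₁ = l + 2 * n₁ := by
    rw [← G.card_face_eq_minimalPeriod w₁, hface1]
  have hm2 : Function.minimalPeriod (⇑G.step) w₂ = l + 2 * n₂ := by
    rw [← G.card_face_eq_minimalPeriod w₂, hface2]
  obtain ⟨r, hr⟩ := hodd
  have hodd1 : Odd (Function.minimalPeriod (⇑G.step) w₁) := ⟨r + n₁, by omega⟩
  have hodd2 : Odd (Function.minimalPeriod (⇑G.step) w₂) := ⟨r + n₂, by omega⟩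
  have hoddall : ∀ a : H, Odd (Function.minimalPeriod (⇑G.step) a) := by
    intro a
    rcases hall a with h | h
    · rw [← G.minimalPeriod_eq_of_sameCycle h]
      exact hodd1
    · rw [← G.minimalPeriod_eq_of_sameCycle h]
      exact hodd2
  refine ⟨?_, ?_, ?_⟩
  · have e1 : Nat.card (Quotient (sameCycleSetoid (G.step ^ 2))) =
        Nat.card (Quotient (sameCycleSetoid G.step)) :=
      Nat.card_congr (Quotient.congrRight (fun a b => G.sq_sameCycle_iff hoddall a b))
    rw [e1, Nat.card_eq_two_iff]
    refine ⟨Quotient.mk _ w₁, Quotient.mk _ w₂, ?_, ?_⟩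
    · intro h
      exact hdist (Quotient.eq.mp h)
    · rw [Set.eq_univ_iff_forall]
      intro q
      obtain ⟨z, rfl⟩ := Quotient.exists_rep q
      rcases hall z with h | h
      · exact Or.inl (Quotient.sound (Equiv.Perm.SameCycle.symm h))
      · exact Or.inr (Quotient.sound (Equiv.Perm.SameCycle.symm h))
  · rw [G.minimalPeriod_sq hodd1, hm1]
  · rw [G.minimalPeriod_sq hodd2, hm2]
end
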